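/- arXiv:2205.13655 — 5 statements merged into one kernel-verified Lean document; each statement's English description precedes it below -/
import Mathlib

section
/- Perturbed strong convexity (Lemma): let h : ℝ^d → ℝ be β-smooth and μ-convex with 0 ≤ μ ≤ β. Then for all x, y, z ∈ ℝ^d, ⟨∇h(x), z − y⟩ ≥ h(z) − h(y) + (μ/4)‖y − z‖² − β‖z − x‖². -/
open scoped InnerProductSpace

/-- Perturbed strong convexity (Lemma): if `h` is `β`-smooth and `μ`-convex with
`0 ≤ μ ≤ β`, then for all `x, y, z`,
`⟨∇h(x), z − y⟩ ≥ h(z) − h(y) + (μ/4)‖y − z‖² − β‖z − x‖²`. -/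
theorem perturbed_strong_convexity
    {E : Type*} [NormedAddCommGroup E] [InnerProductSpace ℝ E] [FiniteDimensional ℝ E]
    (h : E → ℝ) (β μ : ℝ) (hβ : 0 < β) (hμ0 : 0 ≤ μ) (hμβ : μ ≤ β)
    (hdiff : Differentiable ℝ h)
    (hsmooth : ∀ x y : E, ‖gradient h x - gradient h y‖ ≤ β * ‖x - y‖)
    (hconv : ∀ x y : E, ⟪gradient h x, y - x⟫_ℝ ≤ h y - h x - (μ / 2) * ‖x - y‖ ^ 2) :
    ∀ x y z : E,
      ⟪gradient h x, z - y⟫_ℝ ≥ h z - h y + (μ / 4) * ‖y - z‖ ^ 2 - β * ‖z - x‖ ^ 2 := by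
  intro x y z
  have A := hconv x y
  have B := hconv z x
  -- Cauchy–Schwarz + smoothness
  have hCS : ⟪gradient h z - gradient h x, z - x⟫_ℝ ≤ β * ‖z - x‖ ^ 2 := by
    calc ⟪gradient h z - gradient h x, z - x⟫_ℝ
        ≤ ‖gradient h z - gradient h x‖ * ‖z - x‖ := real_inner_le_norm _ _
      _ ≤ (β * ‖z - x‖) * ‖z - x‖ :=
          mul_le_mul_of_nonneg_right (hsmooth z x) (norm_nonneg _)
      _ = β * ‖z - x‖ ^ 2 := by ring
  -- decompose inner products
  have hdec : ⟪gradient h x, z - y⟫_ℝ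
      = -⟪gradient h z, x - z⟫_ℝ - ⟪gradient h z - gradient h x, z - x⟫_ℝ
        - ⟪gradient h x, y - x⟫_ℝ := by
    have e1 : (z : E) - y = (z - x) + (x - y) := by abel
    rw [e1, inner_add_right, inner_sub_left]
    have e2 : (x : E) - z = -(z - x) := by abel
    have e3 : (x : E) - y = -(y - x) := by abel
    rw [e2, e3, inner_neg_right, inner_neg_right]
    ring
  -- triangle-type inequality
  have htri : ‖y - z‖ ^ 2 ≤ 2 * ‖x - y‖ ^ 2 + 2 * ‖z - x‖ ^ 2 := by
    have h1 : ‖y - z‖ ≤ ‖y - x‖ + ‖x - z‖ := norm_sub_le_norm_sub_add_norm_sub y x z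
    have h2 : ‖y - x‖ = ‖x - y‖ := norm_sub_rev _ _
    have h3 : ‖x - z‖ = ‖z - x‖ := norm_sub_rev _ _
    nlinarith [norm_nonneg (x - y), norm_nonneg (z - x), norm_nonneg (y - z),
      sq_nonneg (‖x - y‖ - ‖z - x‖)]
  rw [hdec]
  nlinarith [norm_nonneg (z - x), sq_nonneg (‖z - x‖)]
end

section
/- Contractive mapping (Lemma): let h : ℝ^d → ℝ be β-smooth and μ-convex with μ ≥ 0, and let the step size η satisfy 0 < η ≤ 1/β. Then for all x, y ∈ ℝ^d, ‖x − η∇h(x) − y + η∇h(y)‖² ≤ (1 − μη)‖x − y‖². -/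
open scoped InnerProductSpace

section Aux
variable {E : Type*} [NormedAddCommGroup E] [InnerProductSpace ℝ E] [FiniteDimensional ℝ E]

lemma grad_inner_eq (h : E → ℝ) (x v : E) :
    ⟪gradient h x, v⟫_ℝ = fderiv ℝ h x v := by
  rw [gradient, InnerProductSpace.toDual_symm_apply]

/-- Descent lemma. -/
lemma descent_lemma (h : E → ℝ) (β : ℝ)
    (hdiff : Differentiable ℝ h)
    (hsmooth : ∀ x y : E, ‖gradient h x - gradient h y‖ ≤ β * ‖x - y‖)
    (x y : E) :
    h y ≤ h x + ⟪gradient h x, y - x⟫_ℝ + β / 2 * ‖y - x‖ ^ 2 := by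
  set v := y - x with hv
  set φ : ℝ → ℝ := fun t => h (x + t • v) - t * ⟪gradient h x, v⟫_ℝ - β / 2 * t ^ 2 * ‖v‖ ^ 2
    with hφ
  have hline : ∀ t : ℝ, HasDerivAt (fun t : ℝ => x + t • v) v t := by
    intro t
    simpa using ((hasDerivAt_id t).smul_const v).const_add x
  have hD : ∀ t : ℝ, HasDerivAt φ
      (⟪gradient h (x + t • v), v⟫_ℝ - ⟪gradient h x, v⟫_ℝ - β / 2 * (2 * t) * ‖v‖ ^ 2) t := by
    intro t
    have h1 : HasDerivAt (fun t : ℝ => h (x + t • v)) (⟪gradient h (x + t • v), v⟫_ℝ) t := by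
      have := (hdiff (x + t • v)).hasFDerivAt.comp_hasDerivAt t (hline t)
      rw [grad_inner_eq]
      exact this
    have h2 : HasDerivAt (fun t : ℝ => t * ⟪gradient h x, v⟫_ℝ) (⟪gradient h x, v⟫_ℝ) t := by
      simpa using (hasDerivAt_id t).mul_const _
    have h3 : HasDerivAt (fun t : ℝ => β / 2 * t ^ 2 * ‖v‖ ^ 2) (β / 2 * (2 * t) * ‖v‖ ^ 2) t := by
      have h4 := ((hasDerivAt_pow 2 t).const_mul (β / 2)).mul_const (‖v‖ ^ 2)
      refine h4.congr_deriv ?_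
      norm_num
    exact (h1.sub h2).sub h3
  have key : φ 1 ≤ φ 0 := by
    have hcont : ContinuousOn φ (Set.Icc 0 1) := fun t _ => ((hD t).continuousAt).continuousWithinAt
    have hanti : AntitoneOn φ (Set.Icc (0:ℝ) 1) := by
      apply antitoneOn_of_deriv_nonpos (convex_Icc 0 1) hcont
      · intro t ht
        exact (hD t).differentiableAt.differentiableWithinAt
      · intro t ht
        rw [interior_Icc] at ht
        rw [(hD t).deriv]
        have hb : ⟪gradient h (x + t • v) - gradient h x, v⟫_ℝ ≤ β * t * ‖v‖ ^ 2 := by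
          calc ⟪gradient h (x + t • v) - gradient h x, v⟫_ℝ
              ≤ ‖gradient h (x + t • v) - gradient h x‖ * ‖v‖ := real_inner_le_norm _ _
            _ ≤ (β * ‖(x + t • v) - x‖) * ‖v‖ := by
                have := hsmooth (x + t • v) x
                exact mul_le_mul_of_nonneg_right this (norm_nonneg v)
            _ = β * (|t| * ‖v‖) * ‖v‖ := by rw [add_sub_cancel_left, norm_smul]; simp [Real.norm_eq_abs]
            _ = β * t * ‖v‖ ^ 2 := by rw [abs_of_pos ht.1]; ring
        rw [inner_sub_left] at hb
        nlinarith [hb]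
    exact hanti (by norm_num) (by norm_num) (by norm_num)
  simp only [hφ] at key
  simp only [one_smul, zero_smul, add_zero, zero_mul, sub_zero, one_pow, mul_one,
    zero_pow] at key
  rw [hv] at key ⊢
  have : x + (y - x) = y := by abel
  rw [this] at key
  linarith
end Aux

/-- Contractive mapping (Lemma): if `h` is `β`-smooth and `μ`-convex with `μ ≥ 0`, and
`0 < η ≤ 1/β`, then for all `x, y`,
`‖x − η∇h(x) − y + η∇h(y)‖² ≤ (1 − μη)‖x − y‖²`. -/
theorem contractive_mapping
    {E : Type*} [NormedAddCommGroup E] [InnerProductSpace ℝ E] [FiniteDimensional ℝ E]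
    (h : E → ℝ) (β μ : ℝ) (hβ : 0 < β) (hμ0 : 0 ≤ μ)
    (hdiff : Differentiable ℝ h)
    (hsmooth : ∀ x y : E, ‖gradient h x - gradient h y‖ ≤ β * ‖x - y‖)
    (hconv : ∀ x y : E, ⟪gradient h x, y - x⟫_ℝ ≤ h y - h x - (μ / 2) * ‖x - y‖ ^ 2)
    (η : ℝ) (hη0 : 0 < η) (hηβ : η ≤ 1 / β) :
    ∀ x y : E,
      ‖x - η • gradient h x - y + η • gradient h y‖ ^ 2 ≤ (1 - μ * η) * ‖x - y‖ ^ 2 := by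
  -- co-coercivity (half):
  have coco_half : ∀ x y : E, (1 / (2 * β)) * ‖gradient h y - gradient h x‖ ^ 2
      ≤ h y - h x - ⟪gradient h x, y - x⟫_ℝ := by
    intro x y
    set Δ := gradient h y - gradient h x with hΔ
    set z := y - (1 / β) • Δ with hz
    have hdes := descent_lemma h β hdiff hsmooth y z
    have hcvx : h x + ⟪gradient h x, z - x⟫_ℝ ≤ h z := by
      have := hconv x z
      nlinarith [sq_nonneg ‖x - z‖, mul_nonneg hμ0 (sq_nonneg ‖x - z‖)]
    have hzy : z - y = -((1 / β) • Δ) := by rw [hz]; abel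
    have e1 : ⟪gradient h y, z - y⟫_ℝ = -(1/β) * ⟪gradient h y, Δ⟫_ℝ := by
      rw [hzy, inner_neg_right, real_inner_smul_right]; ring
    have e2 : ‖z - y‖ ^ 2 = (1/β)^2 * ‖Δ‖ ^ 2 := by
      rw [hzy, norm_neg, norm_smul]
      rw [Real.norm_eq_abs, abs_of_pos (by positivity : (0:ℝ) < 1/β)]
      ring
    have e3 : ⟪gradient h x, z - x⟫_ℝ = ⟪gradient h x, y - x⟫_ℝ - (1/β) * ⟪gradient h x, Δ⟫_ℝ := by
      have : z - x = (y - x) - (1/β) • Δ := by rw [hz]; abel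
      rw [this, inner_sub_right, real_inner_smul_right]
    have e4 : ⟪gradient h y, Δ⟫_ℝ - ⟪gradient h x, Δ⟫_ℝ = ‖Δ‖ ^ 2 := by
      rw [← inner_sub_left, ← hΔ, real_inner_self_eq_norm_sq]
    have hβne : (β : ℝ) ≠ 0 := ne_of_gt hβ
    rw [e1, e2] at hdes
    rw [e3] at hcvx
    -- combine
    have : h x + ⟪gradient h x, y - x⟫_ℝ - (1/β) * ⟪gradient h x, Δ⟫_ℝ
        ≤ h y - (1/β) * ⟪gradient h y, Δ⟫_ℝ + β/2 * ((1/β)^2 * ‖Δ‖^2) := by linarith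
    have hfin : h x + ⟪gradient h x, y - x⟫_ℝ + (1/β) * ‖Δ‖^2 - β/2 * ((1/β)^2 * ‖Δ‖^2) ≤ h y := by
      nlinarith [e4]
    have hsimp : (1/β) * ‖Δ‖^2 - β/2 * ((1/β)^2 * ‖Δ‖^2) = (1/(2*β)) * ‖Δ‖^2 := by
      field_simp; ring
    linarith [hfin, hsimp]
  intro x y
  have coco : (1/β) * ‖gradient h x - gradient h y‖ ^ 2 ≤ ⟪gradient h x - gradient h y, x - y⟫_ℝ := by
    have h1 := coco_half x y
    have h2 := coco_half y x
    have e1 : ‖gradient h y - gradient h x‖ = ‖gradient h x - gradient h y‖ := norm_sub_rev _ _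
    have e2 : ⟪gradient h y, x - y⟫_ℝ = -⟪gradient h y, y - x⟫_ℝ := by rw [← inner_neg_right]; congr 1; abel
    have e4 : ⟪gradient h x, x - y⟫_ℝ = -⟪gradient h x, y - x⟫_ℝ := by
      rw [← inner_neg_right]; congr 1; abel
    rw [inner_sub_left, e2, e4]
    rw [e1] at h1
    have ebb : 1/β * ‖gradient h x - gradient h y‖ ^ 2
        = 1/(2*β) * ‖gradient h x - gradient h y‖ ^ 2
          + 1/(2*β) * ‖gradient h x - gradient h y‖ ^ 2 := by
      ring
    linarith [h1, h2, e2, ebb]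
  have strong : μ * ‖x - y‖ ^ 2 ≤ ⟪gradient h x - gradient h y, x - y⟫_ℝ := by
    have h1 := hconv x y
    have h2 := hconv y x
    have e2 : ⟪gradient h y, x - y⟫_ℝ = -⟪gradient h y, y - x⟫_ℝ := by rw [← inner_neg_right]; congr 1; abel
    have en : ‖y - x‖ = ‖x - y‖ := norm_sub_rev _ _
    have e4 : ⟪gradient h x, x - y⟫_ℝ = -⟪gradient h x, y - x⟫_ℝ := by
      rw [← inner_neg_right]; congr 1; abel
    rw [inner_sub_left, e2, e4]
    rw [en] at h2
    linarith
  have expand : ‖x - η • gradient h x - y + η • gradient h y‖ ^ 2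
      = ‖x - y‖ ^ 2 - 2 * η * ⟪gradient h x - gradient h y, x - y⟫_ℝ + η^2 * ‖gradient h x - gradient h y‖ ^ 2 := by
    have : x - η • gradient h x - y + η • gradient h y = (x - y) - η • (gradient h x - gradient h y) := by
      rw [smul_sub]; abel
    rw [this, norm_sub_sq_real, norm_smul, real_inner_smul_right]
    simp [abs_of_pos hη0, real_inner_comm]
    ring
  rw [expand]
  have hηβ' : η * β ≤ 1 := by
    rw [div_eq_mul_inv, one_mul] at hηβ
    calc η * β ≤ β⁻¹ * β := by nlinarith
      _ = 1 := inv_mul_cancel₀ (ne_of_gt hβ)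
  have step1 : η^2 * ‖gradient h x - gradient h y‖ ^ 2 ≤ η * ⟪gradient h x - gradient h y, x - y⟫_ℝ := by
    have : η * ‖gradient h x - gradient h y‖^2 ≤ (1/β) * ‖gradient h x - gradient h y‖^2 := by
      apply mul_le_mul_of_nonneg_right _ (sq_nonneg _)
      exact hηβ
    nlinarith [coco]
  nlinarith [mul_le_mul_of_nonneg_left strong (le_of_lt hη0)]
end

section
/- Bound on the variance of the server update (Lemma): in one round of 1-way Gradient Transfer, if F_f is β-smooth, then E‖x⁺ − x‖² ≤ 4 η̃² β² ℰ + 2 η̃² ((2/(K S)) σ² + σ_c²) + 2 η̃² ‖∇f(x)‖². -/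
open MeasureTheory

/-- The σ-algebra generated by the centralized stochastic gradient `gc` together with all
client stochastic gradients `g j l` strictly preceding `g i k` in the lexicographic order
of the pairs `(k, i)` (step index first, then client index). -/
noncomputable def mixedFLPast {Ω E : Type*} [MeasurableSpace Ω]
    [NormedAddCommGroup E] [InnerProductSpace ℝ E] [MeasurableSpace E]
    {S K : ℕ} (gc : Ω → E) (g : Fin S → Fin K → Ω → E) (i : Fin S) (k : Fin K) :
    MeasurableSpace Ω :=
  MeasurableSpace.comap gc inferInstance ⊔
    ⨆ (p : Fin S × Fin K)
      (_ : (p.2 : ℕ) < (k : ℕ) ∨ ((p.2 : ℕ) = (k : ℕ) ∧ (p.1 : ℕ) < (i : ℕ))),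
      MeasurableSpace.comap (g p.1 p.2) inferInstance

section OwgtHelpers

variable {Ω E' : Type*} [NormedAddCommGroup E'] [InnerProductSpace ℝ E']

/-- The pointwise inner product of two `L²` functions is integrable. -/
theorem owgt_inner_integrable {m0 : MeasurableSpace Ω} {μ : Measure Ω}
    {f h : Ω → E'} (hf : MemLp f 2 μ) (hh : MemLp h 2 μ) :
    Integrable (fun ω => (inner ℝ (f ω) (h ω) : ℝ)) μ := by
  refine Integrable.mono' (g := fun ω => ‖f ω‖ ^ 2 + ‖h ω‖ ^ 2)
    (((memLp_two_iff_integrable_sq_norm hf.1).1 hf).add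
      ((memLp_two_iff_integrable_sq_norm hh.1).1 hh)) (hf.1.inner hh.1) ?_
  refine Filter.Eventually.of_forall fun ω => ?_
  have h1 := abs_real_inner_le_norm (f ω) (h ω)
  have h2 : ‖f ω‖ * ‖h ω‖ ≤ ‖f ω‖ ^ 2 + ‖h ω‖ ^ 2 := by
    nlinarith [norm_nonneg (f ω), norm_nonneg (h ω), sq_nonneg (‖f ω‖ - ‖h ω‖)]
  rw [Real.norm_eq_abs]
  exact h1.trans h2

theorem owgt_sq_norm_add_le {E'' : Type*} [SeminormedAddCommGroup E''] (u v : E'') :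
    ‖u + v‖ ^ 2 ≤ 2 * ‖u‖ ^ 2 + 2 * ‖v‖ ^ 2 := by
  have h0 := norm_add_le u v
  have h1 : ‖u + v‖ ^ 2 ≤ (‖u‖ + ‖v‖) ^ 2 := by
    have := pow_le_pow_left₀ (norm_nonneg (u + v)) h0 2
    exact this
  nlinarith [sq_nonneg (‖u‖ - ‖v‖)]

/-- If `Y` is `m`-measurable and square integrable and `Z` is square integrable with
vanishing conditional expectation given `m`, then `E⟪Y, Z⟫ = 0`. -/
theorem owgt_integral_inner_eq_zero [FiniteDimensional ℝ E']
    {m m0 : MeasurableSpace Ω} (hm : m ≤ m0) {μ : Measure Ω} [IsProbabilityMeasure μ]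
    {Y Z : Ω → E'} (hYm : StronglyMeasurable[m] Y) (hY : MemLp Y 2 μ) (hZ : MemLp Z 2 μ)
    (hZc : μ[Z|m] =ᵐ[μ] 0) :
    ∫ ω, (inner ℝ (Y ω) (Z ω) : ℝ) ∂μ = 0 := by
  have hZint : Integrable Z μ := hZ.integrable one_le_two
  set b := stdOrthonormalBasis ℝ E' with hb
  have hexp : ∀ ω, (inner ℝ (Y ω) (Z ω) : ℝ)
      = ∑ i, (inner ℝ (Y ω) (b i) : ℝ) * (inner ℝ (b i) (Z ω) : ℝ) :=
    fun ω => (b.sum_inner_mul_inner (Y ω) (Z ω)).symm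
  rw [integral_congr_ae (Filter.Eventually.of_forall hexp)]
  have hterm_int : ∀ i, Integrable
      (fun ω => (inner ℝ (Y ω) (b i) : ℝ) * (inner ℝ (b i) (Z ω) : ℝ)) μ := by
    intro i
    have := owgt_inner_integrable (E' := ℝ) (hY.inner_const (b i)) (hZ.const_inner (b i))
    simpa [RCLike.inner_apply, conj_trivial, mul_comm] using this
  rw [integral_finset_sum _ fun i _ => hterm_int i]
  refine Finset.sum_eq_zero fun i _ => ?_
  set fi : Ω → ℝ := fun ω => (inner ℝ (Y ω) (b i) : ℝ) with hfi
  set gi : Ω → ℝ := fun ω => (inner ℝ (b i) (Z ω) : ℝ) with hgi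
  have hgi_int : Integrable gi μ := hZint.const_inner (b i)
  have hfim : StronglyMeasurable[m] fi := hYm.inner stronglyMeasurable_const
  have hfg_int : Integrable (fi * gi) μ := hterm_int i
  have hcond_gi : μ[gi|m] =ᵐ[μ] 0 := by
    have h1 : (fun ω => (inner ℝ (b i) ((μ[Z|m]) ω) : ℝ)) =ᵐ[μ] μ[gi|m] :=
      ae_eq_condExp_of_forall_setIntegral_eq hm (hZint.const_inner (b i))
        (fun s _ _ => (integrable_condExp.const_inner (b i)).integrableOn)
        (fun s hs _ => by
          simp only [hgi]
          rw [integral_inner (integrable_condExp.integrableOn) (b i),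
            integral_inner (hZint.integrableOn) (b i), setIntegral_condExp hm hZint hs])
        (StronglyMeasurable.aestronglyMeasurable (stronglyMeasurable_const.inner stronglyMeasurable_condExp))
    refine h1.symm.trans ?_
    filter_upwards [hZc] with ω hω
    simp only [hω, Pi.zero_apply, inner_zero_right]
  have hpull := condExp_mul_of_stronglyMeasurable_left hfim hfg_int hgi_int
  have hzero : (fi * μ[gi|m]) =ᵐ[μ] 0 := by
    filter_upwards [hcond_gi] with ω hω
    simp only [Pi.mul_apply, hω, Pi.zero_apply, mul_zero]
  calc ∫ ω, (inner ℝ (Y ω) (b i) : ℝ) * (inner ℝ (b i) (Z ω) : ℝ) ∂μ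
      = ∫ ω, (μ[fi * gi|m]) ω ∂μ := (integral_condExp hm).symm
    _ = 0 := by
        rw [integral_congr_ae (hpull.trans hzero)]
        simp

end OwgtHelpers

set_option maxHeartbeats 1000000 in
/-- Bound on the variance of the server update (Lemma): in one round of 1-way Gradient
Transfer, if `F_f` is `β`-smooth, then
`E‖x⁺ − x‖² ≤ 4η̃²β²ℰ + 2η̃²((2/(KS))σ² + σc²) + 2η̃²‖∇f(x)‖²`. -/
theorem owgt_variance_of_server_update
    {E : Type*} [NormedAddCommGroup E] [InnerProductSpace ℝ E] [FiniteDimensional ℝ E]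
    [MeasurableSpace E] [BorelSpace E]
    {Ω : Type*} [MeasurableSpace Ω] (μ : Measure Ω) [IsProbabilityMeasure μ]
    -- current model, local steps, cohort size, learning rates, effective step size
    (x : E) (K S : ℕ) (hK : 1 ≤ K) (hS : 1 ≤ S)
    (η ηs ηt : ℝ) (hη : 0 < η) (hηs : 0 < ηs) (hηt : ηt = (K : ℝ) * ηs * η)
    -- federated and centralized losses
    (Ff Fc : E → ℝ) (hFf_diff : Differentiable ℝ Ff) (hFc_diff : Differentiable ℝ Fc)
    (β σ σc : ℝ) (hβ : 0 < β)
    -- centralized stochastic gradient: mean ∇F_c(x), variance at most σc²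
    (gc : Ω → E) (hgc_meas : Measurable gc) (hgc_L2 : MemLp gc 2 μ)
    (hgc_mean : ∫ ω, gc ω ∂μ = gradient Fc x)
    (hgc_var : ∫ ω, ‖gc ω - gradient Fc x‖ ^ 2 ∂μ ≤ σc ^ 2)
    -- client stochastic gradients
    (g : Fin S → Fin K → Ω → E)
    (hg_meas : ∀ i k, Measurable (g i k)) (hg_L2 : ∀ i k, MemLp (g i k) 2 μ)
    -- local iterates: x_i^0 = x and x_i^{k+1} = x_i^k − η (g_i^{k+1} + g_c)
    (X : Fin S → ℕ → Ω → E)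
    (hX0 : ∀ i, X i 0 = fun _ => x)
    (hXstep : ∀ i (k : Fin K),
      X i ((k : ℕ) + 1) = fun ω => X i (k : ℕ) ω - η • (g i k ω + gc ω))
    -- conditionally on the past, g i k has mean ∇F_f(x_i^k) and variance at most σ²
    (hg_condmean : ∀ i k,
      μ[g i k | mixedFLPast gc g i k] =ᵐ[μ] fun ω => gradient Ff (X i (k : ℕ) ω))
    (hg_condvar : ∀ i k, ∀ᵐ ω ∂μ,
      (μ[(fun ω' => ‖g i k ω' - gradient Ff (X i (k : ℕ) ω')‖ ^ 2) |
          mixedFLPast gc g i k]) ω ≤ σ ^ 2)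
    -- server update
    (xplus : Ω → E)
    (hxplus : xplus = fun ω =>
      x - (ηt / ((K : ℝ) * (S : ℝ))) • ∑ i : Fin S, ∑ k : Fin K, (g i k ω + gc ω))
    -- client drift
    (drift : ℝ)
    (hdrift : drift = (1 / ((K : ℝ) * (S : ℝ))) *
      ∑ i : Fin S, ∑ k : Fin K, ∫ ω, ‖X i (k : ℕ) ω - x‖ ^ 2 ∂μ)
    -- smoothness of the federated loss
    (hFf_smooth : ∀ y z : E, ‖gradient Ff y - gradient Ff z‖ ≤ β * ‖y - z‖) :
    ∫ ω, ‖xplus ω - x‖ ^ 2 ∂μ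
      ≤ 4 * ηt ^ 2 * β ^ 2 * drift
        + 2 * ηt ^ 2 * ((2 / ((K : ℝ) * (S : ℝ))) * σ ^ 2 + σc ^ 2)
        + 2 * ηt ^ 2 * ‖gradient (fun y => Ff y + Fc y) x‖ ^ 2 := by
  classical
  have hKpos : (0:ℝ) < K := by exact_mod_cast hK
  have hSpos : (0:ℝ) < S := by exact_mod_cast hS
  set N : ℝ := (K : ℝ) * (S : ℝ) with hNdef
  have hNpos : 0 < N := mul_pos hKpos hSpos
  -- gradient of the sum
  have hgf_eq : gradient (fun y => Ff y + Fc y) x = gradient Ff x + gradient Fc x := by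
    unfold gradient
    rw [fderiv_fun_add (hFf_diff x) (hFc_diff x), map_add]
  set gf : E := gradient (fun y => Ff y + Fc y) x with hgfdef
  -- continuity of the gradient of Ff
  have hgrad_cont : Continuous (gradient Ff) := by
    have hlip : LipschitzWith (Real.toNNReal β) (gradient Ff) := by
      refine LipschitzWith.of_dist_le_mul fun y z => ?_
      rw [dist_eq_norm, dist_eq_norm]
      simpa [Real.coe_toNNReal β hβ.le] using hFf_smooth y z
    exact hlip.continuous
  -- the past σ-algebras are sub-σ-algebras
  have hm_le : ∀ (i : Fin S) (k : Fin K), mixedFLPast gc g i k ≤ ‹MeasurableSpace Ω› := by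
    intro i k
    refine sup_le (measurable_iff_comap_le.mp hgc_meas) ?_
    exact iSup₂_le fun p _ => measurable_iff_comap_le.mp (hg_meas p.1 p.2)
  have hgc_m : ∀ (i : Fin S) (k : Fin K), Measurable[mixedFLPast gc g i k] gc :=
    fun i k => measurable_iff_comap_le.mpr le_sup_left
  have hg_m : ∀ (i : Fin S) (k : Fin K) (j : Fin S) (l : Fin K),
      ((l : ℕ) < (k : ℕ) ∨ ((l : ℕ) = (k : ℕ) ∧ (j : ℕ) < (i : ℕ))) →
      Measurable[mixedFLPast gc g i k] (g j l) := by
    intro i k j l hcond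
    refine measurable_iff_comap_le.mpr (le_trans ?_ le_sup_right)
    exact le_iSup₂ (f := fun (p : Fin S × Fin K)
      (_ : (p.2 : ℕ) < (k : ℕ) ∨ ((p.2 : ℕ) = (k : ℕ) ∧ (p.1 : ℕ) < (i : ℕ))) =>
      MeasurableSpace.comap (g p.1 p.2) inferInstance) (j, l) hcond
  -- measurability of the local iterates with respect to the past
  have measX : ∀ (j : Fin S) (l : Fin K) (i : Fin S) (n : ℕ), n ≤ (l : ℕ) →
      Measurable[mixedFLPast gc g j l] (X i n) := by
    intro j l i n
    induction n with
    | zero => intro _; rw [hX0 i]; exact measurable_const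
    | succ n ih =>
      intro hn
      have hnl : n < (l : ℕ) := Nat.lt_of_lt_of_le (Nat.lt_succ_self n) hn
      have hnK : n < K := hnl.trans l.2
      have hstep := hXstep i ⟨n, hnK⟩
      rw [show ((⟨n, hnK⟩ : Fin K) : ℕ) = n from rfl] at hstep
      rw [hstep]
      exact (ih hnl.le).sub (((hg_m j l i ⟨n, hnK⟩ (Or.inl hnl)).add (hgc_m j l)).const_smul η)
  -- L² bounds for the local iterates
  have hXL2 : ∀ (i : Fin S) (n : ℕ), n ≤ K → MemLp (X i n) 2 μ := by
    intro i n
    induction n with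
    | zero => intro _; rw [hX0 i]; exact memLp_const x
    | succ n ih =>
      intro hn
      have hnK : n < K := Nat.lt_of_succ_le hn
      have hstep := hXstep i ⟨n, hnK⟩
      rw [show ((⟨n, hnK⟩ : Fin K) : ℕ) = n from rfl] at hstep
      rw [hstep]
      exact (ih hnK.le).sub (((hg_L2 i ⟨n, hnK⟩).add hgc_L2).const_smul η)
  have hgradL2 : ∀ (i : Fin S) (n : ℕ), n ≤ K →
      MemLp (fun ω => gradient Ff (X i n ω)) 2 μ := by
    intro i n hn
    have hX := hXL2 i n hn
    have hmeas : AEStronglyMeasurable (fun ω => gradient Ff (X i n ω)) μ :=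
      hgrad_cont.comp_aestronglyMeasurable hX.1
    refine MemLp.of_le
      (((hX.sub (memLp_const x)).norm.const_mul β).add (memLp_const ‖gradient Ff x‖))
      hmeas (Filter.Eventually.of_forall fun ω => ?_)
    have h0 : ‖gradient Ff (X i n ω)‖
        ≤ ‖gradient Ff (X i n ω) - gradient Ff x‖ + ‖gradient Ff x‖ := by
      simpa using norm_add_le (gradient Ff (X i n ω) - gradient Ff x) (gradient Ff x)
    have h1 : ‖gradient Ff (X i n ω)‖ ≤ β * ‖X i n ω - x‖ + ‖gradient Ff x‖ :=
      h0.trans (add_le_add_left (hFf_smooth _ x) _)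
    rw [Real.norm_eq_abs]
    exact h1.trans (le_abs_self _)
  -- the three components of the decomposition
  set a : Fin S × Fin K → Ω → E :=
    fun p ω => g p.1 p.2 ω - gradient Ff (X p.1 (p.2 : ℕ) ω) with ha
  set bfun : Fin S × Fin K → Ω → E :=
    fun p ω => gradient Ff (X p.1 (p.2 : ℕ) ω) - gradient Ff x with hbfun
  set W : Ω → E := fun ω => gc ω - gradient Fc x + gf with hWdef
  set A : Ω → E := fun ω => ∑ p : Fin S × Fin K, a p ω with hAdef
  set Bf : Ω → E := fun ω => ∑ p : Fin S × Fin K, bfun p ω with hBdef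
  have hXle : ∀ p : Fin S × Fin K, ((p.2 : ℕ)) ≤ K := fun p => (p.2.2).le
  have haL2 : ∀ p, MemLp (a p) 2 μ :=
    fun p => (hg_L2 p.1 p.2).sub (hgradL2 p.1 p.2 (hXle p))
  have hbL2 : ∀ p, MemLp (bfun p) 2 μ :=
    fun p => (hgradL2 p.1 p.2 (hXle p)).sub (memLp_const _)
  have hWL2 : MemLp W 2 μ := (hgc_L2.sub (memLp_const _)).add (memLp_const _)
  have hAL2 : MemLp A 2 μ := memLp_finset_sum _ fun p _ => haL2 p
  have hBL2 : MemLp Bf 2 μ := memLp_finset_sum _ fun p _ => hbL2 p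
  have int_sq : ∀ {h : Ω → E}, MemLp h 2 μ → Integrable (fun ω => ‖h ω‖ ^ 2) μ :=
    fun {h} hh => (memLp_two_iff_integrable_sq_norm hh.1).1 hh
  -- diagonal bound from the conditional variance
  have hdiag : ∀ p : Fin S × Fin K, ∫ ω, ‖a p ω‖ ^ 2 ∂μ ≤ σ ^ 2 := by
    intro p
    have hcv := hg_condvar p.1 p.2
    calc ∫ ω, ‖a p ω‖ ^ 2 ∂μ
        = ∫ ω, (μ[(fun ω' => ‖g p.1 p.2 ω' - gradient Ff (X p.1 ((p.2 : ℕ)) ω')‖ ^ 2) |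
            mixedFLPast gc g p.1 p.2]) ω ∂μ := (integral_condExp (hm_le p.1 p.2)).symm
      _ ≤ ∫ _ω, (σ ^ 2 : ℝ) ∂μ := integral_mono_ae integrable_condExp (integrable_const _) hcv
      _ = σ ^ 2 := by simp
  -- orthogonality of martingale increments
  have horth : ∀ p q : Fin S × Fin K,
      ((p.2 : ℕ) < (q.2 : ℕ) ∨ ((p.2 : ℕ) = (q.2 : ℕ) ∧ (p.1 : ℕ) < (q.1 : ℕ))) →
      ∫ ω, (inner ℝ (a p ω) (a q ω) : ℝ) ∂μ = 0 := by
    intro p q hpq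
    have hm := hm_le q.1 q.2
    have hgm : Measurable[mixedFLPast gc g q.1 q.2] (g p.1 p.2) :=
      hg_m q.1 q.2 p.1 p.2 hpq
    have hple : (p.2 : ℕ) ≤ (q.2 : ℕ) := by
      rcases hpq with h | h
      · exact h.le
      · exact h.1.le
    have hXm : Measurable[mixedFLPast gc g q.1 q.2] (X p.1 (p.2 : ℕ)) :=
      measX q.1 q.2 p.1 (p.2 : ℕ) hple
    have hYm : StronglyMeasurable[mixedFLPast gc g q.1 q.2] (a p) :=
      (hgm.sub (hgrad_cont.measurable.comp hXm)).stronglyMeasurable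
    have hXq : Measurable[mixedFLPast gc g q.1 q.2] (X q.1 (q.2 : ℕ)) :=
      measX q.1 q.2 q.1 (q.2 : ℕ) le_rfl
    have hgradq_sm : StronglyMeasurable[mixedFLPast gc g q.1 q.2]
        (fun ω => gradient Ff (X q.1 (q.2 : ℕ) ω)) :=
      (hgrad_cont.measurable.comp hXq).stronglyMeasurable
    have hgradq_int : Integrable (fun ω => gradient Ff (X q.1 (q.2 : ℕ) ω)) μ :=
      (hgradL2 q.1 (q.2 : ℕ) (hXle q)).integrable one_le_two
    have hgq_int : Integrable (g q.1 q.2) μ := (hg_L2 q.1 q.2).integrable one_le_two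
    have hZc : μ[a q | mixedFLPast gc g q.1 q.2] =ᵐ[μ] 0 := by
      have hsub := condExp_sub (m := mixedFLPast gc g q.1 q.2) hgq_int hgradq_int
      have hfix : μ[(fun ω => gradient Ff (X q.1 (q.2 : ℕ) ω)) | mixedFLPast gc g q.1 q.2]
          = fun ω => gradient Ff (X q.1 (q.2 : ℕ) ω) :=
        condExp_of_stronglyMeasurable hm hgradq_sm hgradq_int
      have haq : a q = g q.1 q.2 - fun ω => gradient Ff (X q.1 (q.2 : ℕ) ω) := rfl
      rw [haq]
      filter_upwards [hsub, hg_condmean q.1 q.2] with ω h1 h2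
      simp only [Pi.zero_apply]
      rw [h1, Pi.sub_apply, h2, congrFun hfix ω, sub_self]
    exact owgt_integral_inner_eq_zero hm hYm (haL2 p) (haL2 q) hZc
  have horth_pair : ∀ p q : Fin S × Fin K, p ≠ q →
      ∫ ω, (inner ℝ (a p ω) (a q ω) : ℝ) ∂μ = 0 := by
    intro p q hne
    have htri : ((p.2 : ℕ) < (q.2 : ℕ) ∨ ((p.2 : ℕ) = (q.2 : ℕ) ∧ (p.1 : ℕ) < (q.1 : ℕ)))
        ∨ ((q.2 : ℕ) < (p.2 : ℕ) ∨ ((q.2 : ℕ) = (p.2 : ℕ) ∧ (q.1 : ℕ) < (p.1 : ℕ))) := by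
      rcases Nat.lt_trichotomy (p.2 : ℕ) (q.2 : ℕ) with h | h | h
      · exact Or.inl (Or.inl h)
      · rcases Nat.lt_trichotomy (p.1 : ℕ) (q.1 : ℕ) with h1 | h1 | h1
        · exact Or.inl (Or.inr ⟨h, h1⟩)
        · exact absurd (Prod.ext (Fin.ext h1) (Fin.ext h)) hne
        · exact Or.inr (Or.inr ⟨h.symm, h1⟩)
      · exact Or.inr (Or.inl h)
    rcases htri with h | h
    · exact horth p q h
    · calc ∫ ω, (inner ℝ (a p ω) (a q ω) : ℝ) ∂μ
          = ∫ ω, (inner ℝ (a q ω) (a p ω) : ℝ) ∂μ :=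
            integral_congr_ae (Filter.Eventually.of_forall fun ω => real_inner_comm _ _)
        _ = 0 := horth q p h
  -- bound on E‖A‖²
  have hIA : ∫ ω, ‖A ω‖ ^ 2 ∂μ ≤ N * σ ^ 2 := by
    have hinner_int : ∀ p q : Fin S × Fin K,
        Integrable (fun ω => (inner ℝ (a p ω) (a q ω) : ℝ)) μ :=
      fun p q => owgt_inner_integrable (haL2 p) (haL2 q)
    have hexp : ∀ ω, ‖A ω‖ ^ 2
        = ∑ p : Fin S × Fin K, ∑ q : Fin S × Fin K, (inner ℝ (a p ω) (a q ω) : ℝ) := by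
      intro ω
      rw [← real_inner_self_eq_norm_sq]
      show (inner ℝ (∑ p : Fin S × Fin K, a p ω) (∑ q : Fin S × Fin K, a q ω) : ℝ) = _
      rw [sum_inner]
      exact Finset.sum_congr rfl fun p _ => inner_sum _ _ _
    calc ∫ ω, ‖A ω‖ ^ 2 ∂μ
        = ∑ p : Fin S × Fin K, ∑ q : Fin S × Fin K,
            ∫ ω, (inner ℝ (a p ω) (a q ω) : ℝ) ∂μ := by
          have hout : ∫ ω, (∑ p : Fin S × Fin K, ∑ q : Fin S × Fin K,
                (inner ℝ (a p ω) (a q ω) : ℝ)) ∂μ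
              = ∑ p : Fin S × Fin K, ∫ ω, (∑ q : Fin S × Fin K,
                (inner ℝ (a p ω) (a q ω) : ℝ)) ∂μ :=
            integral_finset_sum _ fun p _ => integrable_finset_sum _ fun q _ => hinner_int p q
          have hin : ∀ p : Fin S × Fin K, ∫ ω, (∑ q : Fin S × Fin K,
                (inner ℝ (a p ω) (a q ω) : ℝ)) ∂μ
              = ∑ q : Fin S × Fin K, ∫ ω, (inner ℝ (a p ω) (a q ω) : ℝ) ∂μ :=
            fun p => integral_finset_sum _ fun q _ => hinner_int p q
          rw [integral_congr_ae (Filter.Eventually.of_forall hexp), hout]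
          exact Finset.sum_congr rfl fun p _ => hin p
      _ = ∑ p : Fin S × Fin K, ∫ ω, ‖a p ω‖ ^ 2 ∂μ := by
          refine Finset.sum_congr rfl fun p _ => ?_
          rw [Finset.sum_eq_single p (fun q _ hqp => horth_pair p q (Ne.symm hqp))
            (fun h => absurd (Finset.mem_univ p) h)]
          exact integral_congr_ae (Filter.Eventually.of_forall fun ω =>
            real_inner_self_eq_norm_sq _)
      _ ≤ ∑ _p : Fin S × Fin K, σ ^ 2 := Finset.sum_le_sum fun p _ => hdiag p
      _ = N * σ ^ 2 := by
          rw [Finset.sum_const, Finset.card_univ, Fintype.card_prod, Fintype.card_fin,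
            Fintype.card_fin, nsmul_eq_mul, hNdef]
          push_cast
          ring
  -- bound on E‖B‖²
  have hXsubL2 : ∀ p : Fin S × Fin K, MemLp (fun ω => X p.1 (p.2 : ℕ) ω - x) 2 μ :=
    fun p => (hXL2 p.1 (p.2 : ℕ) (hXle p)).sub (memLp_const x)
  have hcard : ((Finset.univ (α := Fin S × Fin K)).card : ℝ) = N := by
    rw [Finset.card_univ, Fintype.card_prod, Fintype.card_fin, Fintype.card_fin, hNdef]
    push_cast
    ring
  have hsumdrift : ∑ p : Fin S × Fin K, ∫ ω, ‖X p.1 (p.2 : ℕ) ω - x‖ ^ 2 ∂μ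
      = N * drift := by
    rw [hdrift, ← Finset.univ_product_univ, Finset.sum_product]
    field_simp
  have hIB : ∫ ω, ‖Bf ω‖ ^ 2 ∂μ ≤ N * β ^ 2 * (N * drift) := by
    have hpt : ∀ ω, ‖Bf ω‖ ^ 2
        ≤ N * ∑ p : Fin S × Fin K, β ^ 2 * ‖X p.1 (p.2 : ℕ) ω - x‖ ^ 2 := by
      intro ω
      have h1 : ‖Bf ω‖ ≤ ∑ p : Fin S × Fin K, ‖bfun p ω‖ := norm_sum_le _ _
      have h2 : ‖Bf ω‖ ^ 2 ≤ (∑ p : Fin S × Fin K, ‖bfun p ω‖) ^ 2 :=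
        pow_le_pow_left₀ (norm_nonneg _) h1 2
      have h3 : (∑ p : Fin S × Fin K, ‖bfun p ω‖) ^ 2
          ≤ ((Finset.univ (α := Fin S × Fin K)).card : ℝ)
            * ∑ p : Fin S × Fin K, ‖bfun p ω‖ ^ 2 := sq_sum_le_card_mul_sum_sq
      have h4 : ∀ p : Fin S × Fin K,
          ‖bfun p ω‖ ^ 2 ≤ β ^ 2 * ‖X p.1 (p.2 : ℕ) ω - x‖ ^ 2 := by
        intro p
        have h5 : ‖bfun p ω‖ ≤ β * ‖X p.1 (p.2 : ℕ) ω - x‖ := hFf_smooth _ _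
        calc ‖bfun p ω‖ ^ 2 ≤ (β * ‖X p.1 (p.2 : ℕ) ω - x‖) ^ 2 :=
              pow_le_pow_left₀ (norm_nonneg _) h5 2
          _ = β ^ 2 * ‖X p.1 (p.2 : ℕ) ω - x‖ ^ 2 := by ring
      calc ‖Bf ω‖ ^ 2
          ≤ ((Finset.univ (α := Fin S × Fin K)).card : ℝ)
            * ∑ p : Fin S × Fin K, ‖bfun p ω‖ ^ 2 := h2.trans h3
        _ ≤ N * ∑ p : Fin S × Fin K, β ^ 2 * ‖X p.1 (p.2 : ℕ) ω - x‖ ^ 2 := by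
            rw [hcard]
            exact mul_le_mul_of_nonneg_left (Finset.sum_le_sum fun p _ => h4 p) hNpos.le
    have hint2 : Integrable
        (fun ω => N * ∑ p : Fin S × Fin K, β ^ 2 * ‖X p.1 (p.2 : ℕ) ω - x‖ ^ 2) μ :=
      (integrable_finset_sum _ fun p _ => (int_sq (hXsubL2 p)).const_mul (β ^ 2)).const_mul N
    calc ∫ ω, ‖Bf ω‖ ^ 2 ∂μ
        ≤ ∫ ω, N * ∑ p : Fin S × Fin K, β ^ 2 * ‖X p.1 (p.2 : ℕ) ω - x‖ ^ 2 ∂μ :=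
          integral_mono (int_sq hBL2) hint2 hpt
      _ = N * ∑ p : Fin S × Fin K, β ^ 2 * ∫ ω, ‖X p.1 (p.2 : ℕ) ω - x‖ ^ 2 ∂μ := by
          have hmulN : ∫ ω, N * (∑ p : Fin S × Fin K,
                β ^ 2 * ‖X p.1 (p.2 : ℕ) ω - x‖ ^ 2) ∂μ
              = N * ∫ ω, (∑ p : Fin S × Fin K,
                β ^ 2 * ‖X p.1 (p.2 : ℕ) ω - x‖ ^ 2) ∂μ := integral_const_mul N _
          have hfs : ∫ ω, (∑ p : Fin S × Fin K,
                β ^ 2 * ‖X p.1 (p.2 : ℕ) ω - x‖ ^ 2) ∂μ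
              = ∑ p : Fin S × Fin K, ∫ ω, β ^ 2 * ‖X p.1 (p.2 : ℕ) ω - x‖ ^ 2 ∂μ :=
            integral_finset_sum _ fun p _ => (int_sq (hXsubL2 p)).const_mul (β ^ 2)
          have hpm : ∀ p : Fin S × Fin K, ∫ ω, β ^ 2 * ‖X p.1 (p.2 : ℕ) ω - x‖ ^ 2 ∂μ
              = β ^ 2 * ∫ ω, ‖X p.1 (p.2 : ℕ) ω - x‖ ^ 2 ∂μ :=
            fun p => integral_const_mul _ _
          rw [hmulN, hfs]
          congr 1
          exact Finset.sum_congr rfl fun p _ => hpm p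
      _ = N * β ^ 2 * (N * drift) := by
          rw [← Finset.mul_sum, hsumdrift]
          ring
  -- bound on E‖W‖²
  have hIW : ∫ ω, ‖W ω‖ ^ 2 ∂μ ≤ σc ^ 2 + ‖gf‖ ^ 2 := by
    have hv_int : Integrable (fun ω => gc ω - gradient Fc x) μ :=
      (hgc_L2.sub (memLp_const _)).integrable one_le_two
    have hvmean : ∫ ω, (gc ω - gradient Fc x) ∂μ = 0 := by
      rw [integral_sub (hgc_L2.integrable one_le_two) (integrable_const _), hgc_mean]
      simp
    have hsq_int : Integrable (fun ω => ‖gc ω - gradient Fc x‖ ^ 2) μ :=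
      int_sq (hgc_L2.sub (memLp_const _))
    have hinner0 : ∫ ω, (inner ℝ (gc ω - gradient Fc x) gf : ℝ) ∂μ = 0 := by
      have h1 : ∫ ω, (inner ℝ gf (gc ω - gradient Fc x) : ℝ) ∂μ
          = (inner ℝ gf (∫ ω, (gc ω - gradient Fc x) ∂μ) : ℝ) := integral_inner hv_int gf
      rw [hvmean, inner_zero_right] at h1
      calc ∫ ω, (inner ℝ (gc ω - gradient Fc x) gf : ℝ) ∂μ
          = ∫ ω, (inner ℝ gf (gc ω - gradient Fc x) : ℝ) ∂μ :=
            integral_congr_ae (Filter.Eventually.of_forall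
              (fun ω => real_inner_comm gf (gc ω - gradient Fc x)))
        _ = 0 := h1
    have hexp : ∀ ω, ‖W ω‖ ^ 2 = ‖gc ω - gradient Fc x‖ ^ 2
        + (2 * (inner ℝ (gc ω - gradient Fc x) gf : ℝ) + ‖gf‖ ^ 2) := by
      intro ω
      rw [show W ω = (gc ω - gradient Fc x) + gf from rfl, norm_add_sq_real]
      ring
    have h2 : ∫ ω, ‖W ω‖ ^ 2 ∂μ = (∫ ω, ‖gc ω - gradient Fc x‖ ^ 2 ∂μ) + ‖gf‖ ^ 2 := by
      have hadd1 : ∫ ω, (‖gc ω - gradient Fc x‖ ^ 2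
            + (2 * (inner ℝ (gc ω - gradient Fc x) gf : ℝ) + ‖gf‖ ^ 2)) ∂μ
          = (∫ ω, ‖gc ω - gradient Fc x‖ ^ 2 ∂μ)
            + ∫ ω, (2 * (inner ℝ (gc ω - gradient Fc x) gf : ℝ) + ‖gf‖ ^ 2) ∂μ :=
        integral_add hsq_int (((hv_int.inner_const gf).const_mul 2).add (integrable_const _))
      have hadd2 : ∫ ω, (2 * (inner ℝ (gc ω - gradient Fc x) gf : ℝ) + ‖gf‖ ^ 2) ∂μ
          = (∫ ω, 2 * (inner ℝ (gc ω - gradient Fc x) gf : ℝ) ∂μ) + ∫ _ω, ‖gf‖ ^ 2 ∂μ :=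
        integral_add ((hv_int.inner_const gf).const_mul 2) (integrable_const _)
      have hmul : ∫ ω, 2 * (inner ℝ (gc ω - gradient Fc x) gf : ℝ) ∂μ
          = 2 * ∫ ω, (inner ℝ (gc ω - gradient Fc x) gf : ℝ) ∂μ := integral_const_mul 2 _
      rw [integral_congr_ae (Filter.Eventually.of_forall hexp), hadd1, hadd2, hmul,
        hinner0, integral_const]
      simp
    rw [h2]
    exact add_le_add_left hgc_var _
  -- pointwise decomposition of the server update
  set c : ℝ := ηt / N with hcdef
  have hpteq : ∀ ω, ‖xplus ω - x‖ ^ 2 = c ^ 2 * ‖A ω + Bf ω + N • W ω‖ ^ 2 := by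
    intro ω
    have hTdec : (∑ i : Fin S, ∑ k : Fin K, (g i k ω + gc ω)) = A ω + Bf ω + N • W ω := by
      have h1 : (∑ i : Fin S, ∑ k : Fin K, (g i k ω + gc ω))
          = ∑ p : Fin S × Fin K, (g p.1 p.2 ω + gc ω) := by
        rw [← Finset.univ_product_univ, Finset.sum_product]
      have h2 : ∀ p : Fin S × Fin K, g p.1 p.2 ω + gc ω = a p ω + bfun p ω + W ω := by
        intro p
        show g p.1 p.2 ω + gc ω
          = (g p.1 p.2 ω - gradient Ff (X p.1 (p.2 : ℕ) ω))
            + (gradient Ff (X p.1 (p.2 : ℕ) ω) - gradient Ff x)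
            + (gc ω - gradient Fc x + gf)
        rw [hgf_eq]
        abel
      rw [h1, Finset.sum_congr rfl fun p _ => h2 p, Finset.sum_add_distrib,
        Finset.sum_add_distrib, Finset.sum_const]
      show A ω + Bf ω + (Finset.univ (α := Fin S × Fin K)).card • W ω = _
      rw [← Nat.cast_smul_eq_nsmul ℝ, hcard]
    have hx1 : xplus ω - x = -(c • (A ω + Bf ω + N • W ω)) := by
      rw [hxplus]
      dsimp only
      rw [hTdec]
      abel
    rw [hx1, norm_neg, norm_smul, mul_pow, Real.norm_eq_abs, sq_abs]
  -- pointwise bound on the decomposed norm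
  have hptle : ∀ ω, ‖A ω + Bf ω + N • W ω‖ ^ 2
      ≤ 4 * ‖A ω‖ ^ 2 + 4 * ‖Bf ω‖ ^ 2 + 2 * (N ^ 2 * ‖W ω‖ ^ 2) := by
    intro ω
    have h1 := owgt_sq_norm_add_le (A ω + Bf ω) (N • W ω)
    have h2 := owgt_sq_norm_add_le (A ω) (Bf ω)
    have h3 : ‖N • W ω‖ ^ 2 = N ^ 2 * ‖W ω‖ ^ 2 := by
      rw [norm_smul, mul_pow, Real.norm_eq_abs, sq_abs]
    rw [h3] at h1
    linarith
  have hintA : Integrable (fun ω => ‖A ω‖ ^ 2) μ := int_sq hAL2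
  have hintB : Integrable (fun ω => ‖Bf ω‖ ^ 2) μ := int_sq hBL2
  have hintW : Integrable (fun ω => ‖W ω‖ ^ 2) μ := int_sq hWL2
  have hintT : Integrable (fun ω => ‖A ω + Bf ω + N • W ω‖ ^ 2) μ :=
    int_sq ((hAL2.add hBL2).add (hWL2.const_smul N))
  calc ∫ ω, ‖xplus ω - x‖ ^ 2 ∂μ
      = c ^ 2 * ∫ ω, ‖A ω + Bf ω + N • W ω‖ ^ 2 ∂μ := by
        have hcm : ∫ ω, c ^ 2 * ‖A ω + Bf ω + N • W ω‖ ^ 2 ∂μ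
            = c ^ 2 * ∫ ω, ‖A ω + Bf ω + N • W ω‖ ^ 2 ∂μ := integral_const_mul _ _
        rw [integral_congr_ae (Filter.Eventually.of_forall hpteq), hcm]
    _ ≤ c ^ 2 * (4 * (N * σ ^ 2) + 4 * (N * β ^ 2 * (N * drift))
          + 2 * (N ^ 2 * (σc ^ 2 + ‖gf‖ ^ 2))) := by
        refine mul_le_mul_of_nonneg_left ?_ (sq_nonneg c)
        calc ∫ ω, ‖A ω + Bf ω + N • W ω‖ ^ 2 ∂μ
            ≤ ∫ ω, (4 * ‖A ω‖ ^ 2 + 4 * ‖Bf ω‖ ^ 2 + 2 * (N ^ 2 * ‖W ω‖ ^ 2)) ∂μ :=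
              integral_mono hintT (((hintA.const_mul 4).add (hintB.const_mul 4)).add
                ((hintW.const_mul (N ^ 2)).const_mul 2)) hptle
          _ = 4 * ∫ ω, ‖A ω‖ ^ 2 ∂μ + 4 * ∫ ω, ‖Bf ω‖ ^ 2 ∂μ
              + 2 * (N ^ 2 * ∫ ω, ‖W ω‖ ^ 2 ∂μ) := by
              have e1 : ∫ ω, (4 * ‖A ω‖ ^ 2 + 4 * ‖Bf ω‖ ^ 2
                    + 2 * (N ^ 2 * ‖W ω‖ ^ 2)) ∂μ
                  = (∫ ω, (4 * ‖A ω‖ ^ 2 + 4 * ‖Bf ω‖ ^ 2) ∂μ)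
                    + ∫ ω, 2 * (N ^ 2 * ‖W ω‖ ^ 2) ∂μ :=
                integral_add ((hintA.const_mul 4).add (hintB.const_mul 4))
                  ((hintW.const_mul (N ^ 2)).const_mul 2)
              have e2 : ∫ ω, (4 * ‖A ω‖ ^ 2 + 4 * ‖Bf ω‖ ^ 2) ∂μ
                  = (∫ ω, 4 * ‖A ω‖ ^ 2 ∂μ) + ∫ ω, 4 * ‖Bf ω‖ ^ 2 ∂μ :=
                integral_add (hintA.const_mul 4) (hintB.const_mul 4)
              have e3 : ∫ ω, 4 * ‖A ω‖ ^ 2 ∂μ = 4 * ∫ ω, ‖A ω‖ ^ 2 ∂μ :=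
                integral_const_mul _ _
              have e4 : ∫ ω, 4 * ‖Bf ω‖ ^ 2 ∂μ = 4 * ∫ ω, ‖Bf ω‖ ^ 2 ∂μ :=
                integral_const_mul _ _
              have e5 : ∫ ω, 2 * (N ^ 2 * ‖W ω‖ ^ 2) ∂μ
                  = 2 * ∫ ω, N ^ 2 * ‖W ω‖ ^ 2 ∂μ := integral_const_mul _ _
              have e6 : ∫ ω, N ^ 2 * ‖W ω‖ ^ 2 ∂μ = N ^ 2 * ∫ ω, ‖W ω‖ ^ 2 ∂μ :=
                integral_const_mul _ _
              rw [e1, e2, e3, e4, e5, e6]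
          _ ≤ 4 * (N * σ ^ 2) + 4 * (N * β ^ 2 * (N * drift))
              + 2 * (N ^ 2 * (σc ^ 2 + ‖gf‖ ^ 2)) := by
              have hb1 := mul_le_mul_of_nonneg_left hIA (by norm_num : (0:ℝ) ≤ 4)
              have hb2 := mul_le_mul_of_nonneg_left hIB (by norm_num : (0:ℝ) ≤ 4)
              have hb3 := mul_le_mul_of_nonneg_left hIW (sq_nonneg N)
              have hb4 := mul_le_mul_of_nonneg_left hb3 (by norm_num : (0:ℝ) ≤ 2)
              exact add_le_add (add_le_add hb1 hb2) hb4
    _ = 4 * ηt ^ 2 * β ^ 2 * drift + 2 * ηt ^ 2 * (2 / N * σ ^ 2 + σc ^ 2)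
        + 2 * ηt ^ 2 * ‖gf‖ ^ 2 := by
        rw [hcdef]
        field_simp
        ring
end

section
/- Bounded client drift for 1-way Gradient Transfer (convex case, Lemma): in one round of 1-way Gradient Transfer, suppose F_f and F_c are both μ-convex (μ ≥ 0) and β-smooth, x* is a global minimizer of f, and the client learning rate satisfies η ≤ 1/β. Then the client drift satisfies ℰ ≤ 16 K² η² β (f(x) − f(x*)) + 2 K² η² ((1/K) σ² + σ_c²). -/
open MeasureTheory

open scoped InnerProductSpace

section OwgtAux

variable {E : Type*} [NormedAddCommGroup E] [InnerProductSpace ℝ E]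

section AnalyticAux
variable [CompleteSpace E]

/-- Quadratic upper bound for functions with a Lipschitz gradient. -/
lemma owgt_smooth_ub {φ : E → ℝ} {φ' : E → E} {β : ℝ} (hβ : 0 < β)
    (hd : ∀ w, HasGradientAt φ (φ' w) w)
    (hl : ∀ u v, ‖φ' u - φ' v‖ ≤ β * ‖u - v‖) (y z : E) :
    φ z ≤ φ y + ⟪φ' y, z - y⟫_ℝ + β / 2 * ‖z - y‖ ^ 2 := by
  set v := z - y with hv
  have hline : ∀ t : ℝ, HasDerivAt (fun t : ℝ => y + t • v) v t := by
    intro t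
    simpa using ((hasDerivAt_id t).smul_const v).const_add y
  have hcomp : ∀ t : ℝ, HasDerivAt (fun t : ℝ => φ (y + t • v)) ⟪φ' (y + t • v), v⟫_ℝ t := by
    intro t
    have h1 : HasFDerivAt φ ((InnerProductSpace.toDual ℝ E) (φ' (y + t • v))) (y + t • v) :=
      hasGradientAt_iff_hasFDerivAt.mp (hd _)
    have := h1.comp_hasDerivAt t (hline t)
    simpa [Function.comp_def, InnerProductSpace.toDual_apply_apply] using this
  set ψ : ℝ → ℝ := fun t => φ (y + t • v) - t * ⟪φ' y, v⟫_ℝ - β / 2 * t ^ 2 * ‖v‖ ^ 2 with hψ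
  have hψd : ∀ t : ℝ, HasDerivAt ψ
      (⟪φ' (y + t • v), v⟫_ℝ - ⟪φ' y, v⟫_ℝ - β / 2 * (2 * t) * ‖v‖ ^ 2) t := by
    intro t
    have h2 : HasDerivAt (fun t : ℝ => t * ⟪φ' y, v⟫_ℝ) ⟪φ' y, v⟫_ℝ t := by
      simpa using (hasDerivAt_id t).mul_const ⟪φ' y, v⟫_ℝ
    have h3 : HasDerivAt (fun t : ℝ => β / 2 * t ^ 2 * ‖v‖ ^ 2) (β / 2 * (2 * t) * ‖v‖ ^ 2) t := by
      have := ((hasDerivAt_pow 2 t).const_mul (β / 2)).mul_const (‖v‖ ^ 2)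
      simpa [mul_comm, mul_assoc, mul_left_comm] using this
    exact ((hcomp t).sub h2).sub h3
  have hanti : AntitoneOn ψ (Set.Icc 0 1) := by
    apply antitoneOn_of_deriv_nonpos (convex_Icc 0 1)
    · exact fun t _ => ((hψd t).continuousAt).continuousWithinAt
    · intro t _
      exact ((hψd t).differentiableAt).differentiableWithinAt
    · intro t ht
      rw [interior_Icc] at ht
      rw [(hψd t).deriv]
      have h4 : ⟪φ' (y + t • v) - φ' y, v⟫_ℝ ≤ β * t * ‖v‖ ^ 2 := by
        have := abs_real_inner_le_norm (φ' (y + t • v) - φ' y) v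
        have h5 : ‖φ' (y + t • v) - φ' y‖ ≤ β * (t * ‖v‖) := by
          have := hl (y + t • v) y
          simpa [norm_smul, abs_of_pos ht.1] using this
        nlinarith [norm_nonneg v, le_abs_self (⟪φ' (y + t • v) - φ' y, v⟫_ℝ)]
      rw [inner_sub_left] at h4
      nlinarith
  have h01 : ψ 1 ≤ ψ 0 := hanti (by simp) (by simp) zero_le_one
  simp only [hψ, one_smul, zero_smul, add_zero, one_pow] at h01
  have : y + v = z := by simp [hv]
  rw [this] at h01
  nlinarith [h01]

/-- Convexity plus smoothness gives cocoercivity of the gradient. -/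
lemma owgt_cocoercive {φ : E → ℝ} {φ' : E → E} {β : ℝ} (hβ : 0 < β)
    (hd : ∀ w, HasGradientAt φ (φ' w) w)
    (hl : ∀ u v, ‖φ' u - φ' v‖ ≤ β * ‖u - v‖)
    (hcx : ∀ y z, ⟪φ' y, z - y⟫_ℝ ≤ φ z - φ y) (u v : E) :
    (1 / β) * ‖φ' u - φ' v‖ ^ 2 ≤ ⟪φ' u - φ' v, u - v⟫_ℝ := by
  have breg : ∀ a b : E, 1 / (2 * β) * ‖φ' b - φ' a‖ ^ 2 ≤ φ b - φ a - ⟪φ' a, b - a⟫_ℝ := by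
    intro a b
    set χ : E → ℝ := fun w => φ w - ⟪φ' a, w⟫_ℝ with hχ
    set χ' : E → E := fun w => φ' w - φ' a with hχ'
    have hχd : ∀ w, HasGradientAt χ (χ' w) w := by
      intro w
      rw [hasGradientAt_iff_hasFDerivAt]
      have h1 : HasFDerivAt φ ((InnerProductSpace.toDual ℝ E) (φ' w)) w :=
        hasGradientAt_iff_hasFDerivAt.mp (hd w)
      have h2 := h1.sub ((InnerProductSpace.toDual ℝ E (φ' a)).hasFDerivAt (x := w))
      have h3 : (InnerProductSpace.toDual ℝ E) (χ' w)
          = (InnerProductSpace.toDual ℝ E) (φ' w) - (InnerProductSpace.toDual ℝ E) (φ' a) := by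
        simp [hχ']
      rw [h3]
      have h4 : χ = fun y => φ y - (InnerProductSpace.toDual ℝ E (φ' a)) y := by
        funext y; simp [hχ, InnerProductSpace.toDual_apply_apply]
      rw [h4]; exact h2
    have hχl : ∀ p q, ‖χ' p - χ' q‖ ≤ β * ‖p - q‖ := by
      intro p q; simpa [hχ'] using hl p q
    have hχcx : ∀ y z, ⟪χ' y, z - y⟫_ℝ ≤ χ z - χ y := by
      intro y z
      have h5 := hcx y z
      have h6 : ⟪φ' a, z - y⟫_ℝ = ⟪φ' a, z⟫_ℝ - ⟪φ' a, y⟫_ℝ := inner_sub_right _ _ _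
      have h7 : ⟪χ' y, z - y⟫_ℝ = ⟪φ' y, z - y⟫_ℝ - ⟪φ' a, z - y⟫_ℝ := inner_sub_left _ _ _
      have h8 : χ z - χ y = (φ z - ⟪φ' a, z⟫_ℝ) - (φ y - ⟪φ' a, y⟫_ℝ) := rfl
      rw [h7, h8]
      linarith
    have hmin : ∀ w, χ a ≤ χ w := by
      intro w
      have h5 := hχcx a w
      have h6 : ⟪χ' a, w - a⟫_ℝ = 0 := by
        have : χ' a = 0 := by simp [hχ']
        simp [this]
      linarith [h5, h6.ge, h6.le]
    have hub := owgt_smooth_ub hβ hχd hχl b (b - (1 / β) • χ' b)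
    have h7 : χ a ≤ χ (b - (1 / β) • χ' b) := hmin _
    have h8 : (b - (1 / β) • χ' b) - b = -((1 / β) • χ' b) := by abel
    rw [h8] at hub
    have h9 : ⟪χ' b, -((1 / β) • χ' b)⟫_ℝ = -((1 / β) * ‖χ' b‖ ^ 2) := by
      rw [inner_neg_right, real_inner_smul_right, real_inner_self_eq_norm_sq]
    have h10 : ‖-((1 / β) • χ' b)‖ ^ 2 = (1 / β) ^ 2 * ‖χ' b‖ ^ 2 := by
      rw [norm_neg, norm_smul]
      simp [abs_of_pos (by positivity : (0:ℝ) < 1 / β), mul_pow]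
    rw [h9, h10] at hub
    have key : χ a ≤ χ b - 1 / (2 * β) * ‖χ' b‖ ^ 2 := by
      have hb : β ≠ 0 := ne_of_gt hβ
      have : χ b + -((1 / β) * ‖χ' b‖ ^ 2) + β / 2 * ((1 / β) ^ 2 * ‖χ' b‖ ^ 2)
          = χ b - 1 / (2 * β) * ‖χ' b‖ ^ 2 := by field_simp; ring
      linarith [h7.trans hub, this.ge, this.le]
    simp only [hχ, hχ'] at key
    have h11 : ⟪φ' a, b⟫_ℝ - ⟪φ' a, a⟫_ℝ = ⟪φ' a, b - a⟫_ℝ := by rw [inner_sub_right]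
    linarith
  have b1 := breg u v
  have b2 := breg v u
  have h13 : ⟪φ' u, v - u⟫_ℝ + ⟪φ' v, u - v⟫_ℝ = -⟪φ' u - φ' v, u - v⟫_ℝ := by
    rw [inner_sub_left]
    have : (v : E) - u = -(u - v) := by abel
    rw [this, inner_neg_right]
    ring
  have hb : β ≠ 0 := ne_of_gt hβ
  have hsum : 1 / (2 * β) * ‖φ' u - φ' v‖ ^ 2 + 1 / (2 * β) * ‖φ' u - φ' v‖ ^ 2
      = 1 / β * ‖φ' u - φ' v‖ ^ 2 := by field_simp; ring
  have hnorm : ‖φ' v - φ' u‖ ^ 2 = ‖φ' u - φ' v‖ ^ 2 := by rw [norm_sub_rev]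
  rw [hnorm] at b1
  linarith [b1, b2, hsum, h13]

/-- The pointwise one-step inequality for the drift recursion. -/
lemma owgt_pointwise {η β : ℝ} (hη : 0 < η) (hβ : 0 < β) (hηβ : η ≤ 1 / β)
    (W Gx G0 gcv gv : E)
    (hco : (1 / β) * ‖Gx - G0‖ ^ 2 ≤ ⟪Gx - G0, W⟫_ℝ) :
    ‖W - η • (gv + gcv)‖ ^ 2 ≤ ‖W‖ ^ 2 + 2 * η * (‖G0 + gcv‖ * ‖W‖)
      + 2 * η ^ 2 * ‖G0 + gcv‖ ^ 2 + η ^ 2 * ‖gv - Gx‖ ^ 2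
      + ⟪gv - Gx, (2 * η ^ 2) • (Gx + gcv) - (2 * η) • W⟫_ℝ := by
  have hsplit : gv + gcv = (Gx + gcv) + (gv - Gx) := by abel
  rw [hsplit]
  have hAd : Gx + gcv = (Gx - G0) + (G0 + gcv) := by abel
  have e1 : ‖W - η • ((Gx + gcv) + (gv - Gx))‖ ^ 2
      = ‖W‖ ^ 2 - 2 * (η * (⟪W, Gx + gcv⟫_ℝ + ⟪W, gv - Gx⟫_ℝ))
        + η ^ 2 * (‖Gx + gcv‖ ^ 2 + 2 * ⟪Gx + gcv, gv - Gx⟫_ℝ + ‖gv - Gx‖ ^ 2) := by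
    rw [norm_sub_sq_real, real_inner_smul_right, inner_add_right, norm_smul, mul_pow,
      Real.norm_eq_abs, sq_abs, norm_add_sq_real]
  rw [e1]
  have h2 : ⟪W, Gx + gcv⟫_ℝ = ⟪Gx - G0, W⟫_ℝ + ⟪G0 + gcv, W⟫_ℝ := by
    rw [real_inner_comm, hAd, inner_add_left]
  have h3 : -(‖G0 + gcv‖ * ‖W‖) ≤ ⟪G0 + gcv, W⟫_ℝ := by
    have h := abs_real_inner_le_norm (G0 + gcv) W
    linarith [neg_abs_le ⟪G0 + gcv, W⟫_ℝ]
  have h4 : ‖Gx + gcv‖ ^ 2 ≤ 2 * ‖Gx - G0‖ ^ 2 + 2 * ‖G0 + gcv‖ ^ 2 := by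
    have h5 : ‖Gx + gcv‖ ≤ ‖Gx - G0‖ + ‖G0 + gcv‖ := by
      rw [hAd]; exact norm_add_le _ _
    nlinarith [norm_nonneg (Gx + gcv), norm_nonneg (Gx - G0), norm_nonneg (G0 + gcv),
      sq_nonneg (‖Gx - G0‖ - ‖G0 + gcv‖)]
  have h6 : ⟪gv - Gx, (2 * η ^ 2) • (Gx + gcv) - (2 * η) • W⟫_ℝ
      = 2 * η ^ 2 * ⟪Gx + gcv, gv - Gx⟫_ℝ - 2 * η * ⟪W, gv - Gx⟫_ℝ := by
    rw [inner_sub_right, real_inner_smul_right, real_inner_smul_right,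
      real_inner_comm (gv - Gx) (Gx + gcv), real_inner_comm (gv - Gx) W]
  have hco' : η ^ 2 * ‖Gx - G0‖ ^ 2 ≤ η * ⟪Gx - G0, W⟫_ℝ := by
    have h7 : η * η ≤ η * (1 / β) := mul_le_mul_of_nonneg_left hηβ hη.le
    have h8 := mul_le_mul_of_nonneg_left hco hη.le
    nlinarith [sq_nonneg ‖Gx - G0‖]
  have h4' : η ^ 2 * ‖Gx + gcv‖ ^ 2
      ≤ η ^ 2 * (2 * ‖Gx - G0‖ ^ 2 + 2 * ‖G0 + gcv‖ ^ 2) :=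
    mul_le_mul_of_nonneg_left h4 (sq_nonneg η)
  have h3' : 2 * η * (-(‖G0 + gcv‖ * ‖W‖)) ≤ 2 * η * ⟪G0 + gcv, W⟫_ℝ :=
    mul_le_mul_of_nonneg_left h3 (by positivity)
  nlinarith [h2, h6, hco', h4', h3']

end AnalyticAux

section ProbAux
variable {Ω : Type*} {m m0 : MeasurableSpace Ω} {μ : Measure Ω}

lemma owgt_integrable_mul_L2 {u v : Ω → ℝ} (hu : MemLp u 2 μ) (hv : MemLp v 2 μ) :
    Integrable (fun ω => u ω * v ω) μ := by
  have hu2 : Integrable (fun ω => u ω ^ 2) μ := (memLp_two_iff_integrable_sq hu.1).mp hu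
  have hv2 : Integrable (fun ω => v ω ^ 2) μ := (memLp_two_iff_integrable_sq hv.1).mp hv
  refine Integrable.mono' ((hu2.add hv2).const_mul (1/2 : ℝ)) (hu.1.mul hv.1) ?_
  filter_upwards with ω
  simp only [Pi.add_apply]
  have h1 : ‖u ω * v ω‖ = |u ω| * |v ω| := by rw [norm_mul]; rfl
  rw [h1]
  nlinarith [sq_abs (u ω), sq_abs (v ω), sq_nonneg (|u ω| - |v ω|)]

lemma owgt_integrable_inner_L2 {f Y : Ω → E} (hf : MemLp f 2 μ) (hY : MemLp Y 2 μ) :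
    Integrable (fun ω => ⟪f ω, Y ω⟫_ℝ) μ := by
  refine Integrable.mono' (owgt_integrable_mul_L2 hf.norm hY.norm) (hf.1.inner hY.1) ?_
  filter_upwards with ω
  exact (abs_real_inner_le_norm _ _)

variable [FiniteDimensional ℝ E]

lemma owgt_condexp_const_inner [IsFiniteMeasure μ] (hm : m ≤ m0) {f : Ω → E}
    (hf : Integrable f μ) (c : E) :
    (μ[(fun ω => ⟪c, f ω⟫_ℝ) | m]) =ᵐ[μ] fun ω => ⟪c, (μ[f | m]) ω⟫_ℝ := by
  haveI : IsFiniteMeasure (μ.trim hm) := isFiniteMeasure_trim hm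
  refine (ae_eq_condExp_of_forall_setIntegral_eq hm (hf.const_inner c) ?_ ?_ ?_).symm
  · intro s _ _
    exact (integrable_condExp.const_inner c).integrableOn
  · intro s hs hμs
    rw [integral_inner (integrable_condExp.integrableOn) c,
      setIntegral_condExp hm hf hs, ← integral_inner (hf.integrableOn) c]
  · exact (stronglyMeasurable_const.inner stronglyMeasurable_condExp).aestronglyMeasurable

lemma owgt_integral_inner_condexp [IsFiniteMeasure μ] (hm : m ≤ m0) {f Y : Ω → E}
    (hf : MemLp f 2 μ) (hY : MemLp Y 2 μ) (hYm : StronglyMeasurable[m] Y) :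
    ∫ ω, ⟪f ω, Y ω⟫_ℝ ∂μ = ∫ ω, ⟪(μ[f | m]) ω, Y ω⟫_ℝ ∂μ := by
  haveI : IsFiniteMeasure (μ.trim hm) := isFiniteMeasure_trim hm
  have hfi : Integrable f μ := hf.integrable one_le_two
  set b := stdOrthonormalBasis ℝ E with hb
  have hexp : ∀ (p : Ω → E) (ω : Ω),
      ⟪p ω, Y ω⟫_ℝ = ∑ j, ⟪Y ω, b j⟫_ℝ * ⟪b j, p ω⟫_ℝ := by
    intro p ω
    rw [b.sum_inner_mul_inner (Y ω) (p ω), real_inner_comm]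
  have hYj : ∀ j, StronglyMeasurable[m] (fun ω => ⟪Y ω, b j⟫_ℝ) := fun j =>
    hYm.inner stronglyMeasurable_const
  have hfj_int : ∀ j, Integrable (fun ω => ⟪b j, f ω⟫_ℝ) μ := fun j => hfi.const_inner (b j)
  have hmul_int : ∀ j, Integrable ((fun ω => ⟪Y ω, b j⟫_ℝ) * fun ω => ⟪b j, f ω⟫_ℝ) μ := by
    intro j
    exact owgt_integrable_mul_L2 (hY.inner_const (b j)) (hf.const_inner (b j))
  have hpull : ∀ j, (μ[(fun ω => ⟪Y ω, b j⟫_ℝ) * (fun ω => ⟪b j, f ω⟫_ℝ) | m]) =ᵐ[μ]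
      (fun ω => ⟪Y ω, b j⟫_ℝ) * (μ[(fun ω => ⟪b j, f ω⟫_ℝ) | m]) := fun j =>
    condExp_mul_of_stronglyMeasurable_left (hYj j) (hmul_int j) (hfj_int j)
  have hcondj : ∀ j, (μ[(fun ω => ⟪b j, f ω⟫_ℝ) | m]) =ᵐ[μ]
      fun ω => ⟪b j, (μ[f | m]) ω⟫_ℝ := fun j => owgt_condexp_const_inner hm hfi (b j)
  have hterm_cond_ae : ∀ j, (μ[(fun ω => ⟪Y ω, b j⟫_ℝ) * (fun ω => ⟪b j, f ω⟫_ℝ) | m]) =ᵐ[μ]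
      fun ω => ⟪Y ω, b j⟫_ℝ * ⟪b j, (μ[f | m]) ω⟫_ℝ := by
    intro j
    refine (hpull j).trans ?_
    filter_upwards [hcondj j] with ω hω
    simp only [Pi.mul_apply]
    rw [hω]
  have hterm_cond_int : ∀ j, Integrable (fun ω => ⟪Y ω, b j⟫_ℝ * ⟪b j, (μ[f | m]) ω⟫_ℝ) μ :=
    fun j => integrable_condExp.congr (hterm_cond_ae j)
  have h1 : ∫ ω, ⟪f ω, Y ω⟫_ℝ ∂μ = ∑ j, ∫ ω, ⟪Y ω, b j⟫_ℝ * ⟪b j, f ω⟫_ℝ ∂μ := by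
    have e1 : ∫ ω, ⟪f ω, Y ω⟫_ℝ ∂μ = ∫ ω, ∑ j, ⟪Y ω, b j⟫_ℝ * ⟪b j, f ω⟫_ℝ ∂μ :=
      integral_congr_ae (Filter.Eventually.of_forall fun ω => hexp f ω)
    rw [e1]
    exact integral_finset_sum _ (fun j _ => hmul_int j)
  have h2 : ∫ ω, ⟪(μ[f | m]) ω, Y ω⟫_ℝ ∂μ
      = ∑ j, ∫ ω, ⟪Y ω, b j⟫_ℝ * ⟪b j, (μ[f | m]) ω⟫_ℝ ∂μ := by
    have e2 : ∫ ω, ⟪(μ[f | m]) ω, Y ω⟫_ℝ ∂μ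
        = ∫ ω, ∑ j, ⟪Y ω, b j⟫_ℝ * ⟪b j, (μ[f | m]) ω⟫_ℝ ∂μ :=
      integral_congr_ae (Filter.Eventually.of_forall fun ω => hexp _ ω)
    rw [e2]
    exact integral_finset_sum _ (fun j _ => hterm_cond_int j)
  rw [h1, h2]
  refine Finset.sum_congr rfl fun j _ => ?_
  calc ∫ ω, ⟪Y ω, b j⟫_ℝ * ⟪b j, f ω⟫_ℝ ∂μ
      = ∫ ω, (μ[(fun ω => ⟪Y ω, b j⟫_ℝ) * (fun ω => ⟪b j, f ω⟫_ℝ) | m]) ω ∂μ :=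
        (integral_condExp hm).symm
    _ = ∫ ω, ⟪Y ω, b j⟫_ℝ * ⟪b j, (μ[f | m]) ω⟫_ℝ ∂μ :=
        integral_congr_ae (hterm_cond_ae j)

end ProbAux

lemma owgt_sum_range_sq_le (K : ℕ) : (∑ k ∈ Finset.range K, (k:ℝ)^2) ≤ (K:ℝ)^3/3 := by
  induction K with
  | zero => simp
  | succ n ih =>
    rw [Finset.sum_range_succ]
    push_cast
    nlinarith [ih, sq_nonneg ((n:ℝ)), Nat.cast_nonneg (α := ℝ) n]

lemma owgt_sum_range_le (K : ℕ) : (∑ k ∈ Finset.range K, (k:ℝ)) ≤ (K:ℝ)^2/2 := by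
  induction K with
  | zero => simp
  | succ n ih =>
    rw [Finset.sum_range_succ]
    push_cast
    nlinarith [ih, Nat.cast_nonneg (α := ℝ) n]

end OwgtAux

set_option maxHeartbeats 4000000 in
/-- Bounded client drift for 1-way Gradient Transfer (convex case, Lemma): if `F_f` and
`F_c` are `μ`-convex and `β`-smooth, `x*` is a global minimizer of `f`, and `η ≤ 1/β`,
then `ℰ ≤ 16K²η²β(f(x) − f(x*)) + 2K²η²((1/K)σ² + σc²)`. -/
theorem owgt_bounded_drift_convex
    {E : Type*} [NormedAddCommGroup E] [InnerProductSpace ℝ E] [FiniteDimensional ℝ E]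
    [MeasurableSpace E] [BorelSpace E]
    {Ω : Type*} [MeasurableSpace Ω] (μ : Measure Ω) [IsProbabilityMeasure μ]
    -- current model, local steps, cohort size, learning rates, effective step size
    (x : E) (K S : ℕ) (hK : 1 ≤ K) (hS : 1 ≤ S)
    (η ηs ηt : ℝ) (hη : 0 < η) (hηs : 0 < ηs) (hηt : ηt = (K : ℝ) * ηs * η)
    -- federated and centralized losses
    (Ff Fc : E → ℝ) (hFf_diff : Differentiable ℝ Ff) (hFc_diff : Differentiable ℝ Fc)
    (β σ σc : ℝ) (hβ : 0 < β)
    -- centralized stochastic gradient: mean ∇F_c(x), variance at most σc²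
    (gc : Ω → E) (hgc_meas : Measurable gc) (hgc_L2 : MemLp gc 2 μ)
    (hgc_mean : ∫ ω, gc ω ∂μ = gradient Fc x)
    (hgc_var : ∫ ω, ‖gc ω - gradient Fc x‖ ^ 2 ∂μ ≤ σc ^ 2)
    -- client stochastic gradients
    (g : Fin S → Fin K → Ω → E)
    (hg_meas : ∀ i k, Measurable (g i k)) (hg_L2 : ∀ i k, MemLp (g i k) 2 μ)
    -- local iterates: x_i^0 = x and x_i^{k+1} = x_i^k − η (g_i^{k+1} + g_c)
    (X : Fin S → ℕ → Ω → E)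
    (hX0 : ∀ i, X i 0 = fun _ => x)
    (hXstep : ∀ i (k : Fin K),
      X i ((k : ℕ) + 1) = fun ω => X i (k : ℕ) ω - η • (g i k ω + gc ω))
    -- conditionally on the past, g i k has mean ∇F_f(x_i^k) and variance at most σ²
    (hg_condmean : ∀ i k,
      μ[g i k | mixedFLPast gc g i k] =ᵐ[μ] fun ω => gradient Ff (X i (k : ℕ) ω))
    (hg_condvar : ∀ i k, ∀ᵐ ω ∂μ,
      (μ[(fun ω' => ‖g i k ω' - gradient Ff (X i (k : ℕ) ω')‖ ^ 2) |
          mixedFLPast gc g i k]) ω ≤ σ ^ 2)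
    -- server update
    (xplus : Ω → E)
    (hxplus : xplus = fun ω =>
      x - (ηt / ((K : ℝ) * (S : ℝ))) • ∑ i : Fin S, ∑ k : Fin K, (g i k ω + gc ω))
    -- client drift
    (drift : ℝ)
    (hdrift : drift = (1 / ((K : ℝ) * (S : ℝ))) *
      ∑ i : Fin S, ∑ k : Fin K, ∫ ω, ‖X i (k : ℕ) ω - x‖ ^ 2 ∂μ)
    -- μ-convexity and β-smoothness of the federated and centralized losses
    (μc : ℝ) (hμc : 0 ≤ μc)
    (hFf_conv : ∀ y z : E, ⟪gradient Ff y, z - y⟫_ℝ ≤ Ff z - Ff y - (μc / 2) * ‖y - z‖ ^ 2)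
    (hFc_conv : ∀ y z : E, ⟪gradient Fc y, z - y⟫_ℝ ≤ Fc z - Fc y - (μc / 2) * ‖y - z‖ ^ 2)
    (hFf_smooth : ∀ y z : E, ‖gradient Ff y - gradient Ff z‖ ≤ β * ‖y - z‖)
    (hFc_smooth : ∀ y z : E, ‖gradient Fc y - gradient Fc z‖ ≤ β * ‖y - z‖)
    -- x* is a global minimizer of f = F_f + F_c
    (xs : E) (hxs : ∀ y, Ff xs + Fc xs ≤ Ff y + Fc y)
    -- client learning rate bound
    (hηβ : η ≤ 1 / β) :
    drift
      ≤ 16 * (K : ℝ) ^ 2 * η ^ 2 * β * ((Ff x + Fc x) - (Ff xs + Fc xs))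
        + 2 * (K : ℝ) ^ 2 * η ^ 2 * ((1 / (K : ℝ)) * σ ^ 2 + σc ^ 2) := by
  classical
  have hσ2nonneg : (0:ℝ) ≤ σ ^ 2 := sq_nonneg σ
  -- convexity of Ff without the strong-convexity term
  have hFf_cx : ∀ y z : E, ⟪gradient Ff y, z - y⟫_ℝ ≤ Ff z - Ff y := by
    intro y z
    have h := hFf_conv y z
    nlinarith [sq_nonneg ‖y - z‖, hμc]
  have hFf_grad : ∀ w, HasGradientAt Ff (gradient Ff w) w := fun w => (hFf_diff w).hasGradientAt
  have hco := owgt_cocoercive hβ hFf_grad hFf_smooth hFf_cx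
  -- continuity of the gradient of Ff
  have hgradFf_cont : Continuous (gradient Ff) := by
    have hlip : LipschitzWith (Real.toNNReal β) (gradient Ff) := by
      apply LipschitzWith.of_dist_le_mul
      intro u v
      rw [dist_eq_norm, dist_eq_norm]
      calc ‖gradient Ff u - gradient Ff v‖ ≤ β * ‖u - v‖ := hFf_smooth u v
        _ = (Real.toNNReal β : ℝ) * ‖u - v‖ := by rw [Real.coe_toNNReal β hβ.le]
    exact hlip.continuous
  -- the past σ-algebras are sub-σ-algebras
  have hm_le : ∀ i k, mixedFLPast gc g i k ≤ (inferInstance : MeasurableSpace Ω) := by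
    intro i k
    unfold mixedFLPast
    refine sup_le hgc_meas.comap_le ?_
    exact iSup₂_le fun p _ => (hg_meas p.1 p.2).comap_le
  have hgc_sm : ∀ i k, StronglyMeasurable[mixedFLPast gc g i k] gc := by
    intro i k
    have hle : MeasurableSpace.comap gc inferInstance ≤ mixedFLPast gc g i k := by
      unfold mixedFLPast; exact le_sup_left
    exact (Measurable.of_comap_le hle).stronglyMeasurable
  have hg_sm : ∀ i (k l : Fin K), (l:ℕ) < (k:ℕ) →
      StronglyMeasurable[mixedFLPast gc g i k] (g i l) := by
    intro i k l hl
    have hle : MeasurableSpace.comap (g i l) inferInstance ≤ mixedFLPast gc g i k := by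
      unfold mixedFLPast
      refine le_trans ?_ le_sup_right
      exact le_iSup₂ (f := fun (p : Fin S × Fin K)
        (_ : (p.2 : ℕ) < (k : ℕ) ∨ ((p.2:ℕ) = (k:ℕ) ∧ (p.1:ℕ) < (i:ℕ))) =>
        MeasurableSpace.comap (g p.1 p.2) inferInstance) (i, l) (Or.inl hl)
    exact (Measurable.of_comap_le hle).stronglyMeasurable
  -- L² bounds for the iterates
  have hX_L2 : ∀ i (l : ℕ), l ≤ K → MemLp (X i l) 2 μ := by
    intro i l
    induction l with
    | zero => intro _; rw [hX0 i]; exact memLp_const x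
    | succ n ih =>
      intro hn
      have hnK : n < K := hn
      have hs : X i (n+1) = fun ω => X i n ω - η • (g i ⟨n, hnK⟩ ω + gc ω) :=
        hXstep i ⟨n, hnK⟩
      rw [hs]
      exact (ih hnK.le).sub (((hg_L2 i ⟨n, hnK⟩).add hgc_L2).const_smul η)
  -- measurability of the iterates w.r.t. the past
  have hX_sm : ∀ i (k : Fin K) (l : ℕ), l ≤ (k:ℕ) →
      StronglyMeasurable[mixedFLPast gc g i k] (X i l) := by
    intro i k l
    induction l with
    | zero => intro _; rw [hX0 i]; exact stronglyMeasurable_const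
    | succ n ih =>
      intro hn
      have hnk : n < (k:ℕ) := hn
      have hnK : n < K := hnk.trans k.isLt
      have hs : X i (n+1) = fun ω => X i n ω - η • (g i ⟨n, hnK⟩ ω + gc ω) :=
        hXstep i ⟨n, hnK⟩
      rw [hs]
      have hgl : StronglyMeasurable[mixedFLPast gc g i k] (g i ⟨n, hnK⟩) :=
        hg_sm i k ⟨n, hnK⟩ hnk
      exact (ih hnk.le).sub ((hgl.add (hgc_sm i k)).const_smul η)
  -- L² bound for composed gradients
  have hG_L2 : ∀ i (l : ℕ), l ≤ K → MemLp (fun ω => gradient Ff (X i l ω)) 2 μ := by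
    intro i l hl
    have hXl := hX_L2 i l hl
    have hdom : MemLp (fun ω => ‖gradient Ff x‖ + β * ‖X i l ω - x‖) 2 μ :=
      (memLp_const ‖gradient Ff x‖).add (((hXl.sub (memLp_const x)).norm).const_mul β)
    refine MemLp.of_le hdom (hgradFf_cont.comp_aestronglyMeasurable hXl.1) ?_
    filter_upwards with ω
    have h1 := hFf_smooth (X i l ω) x
    have h2 := norm_sub_norm_le (gradient Ff (X i l ω)) (gradient Ff x)
    have h3 : (0:ℝ) ≤ ‖gradient Ff x‖ + β * ‖X i l ω - x‖ := by positivity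
    rw [Real.norm_eq_abs, abs_of_nonneg h3]
    linarith
  -- the recurring quantity Γ
  set a0 : Ω → E := fun ω => gradient Ff x + gc ω with ha0def
  set Γ : ℝ := ∫ ω, ‖a0 ω‖ ^ 2 ∂μ with hΓdef
  have ha0_L2 : MemLp a0 2 μ := (memLp_const (gradient Ff x)).add hgc_L2
  have hΓ0 : 0 ≤ Γ := integral_nonneg fun ω => sq_nonneg _
  have ha0sq_int : Integrable (fun ω => ‖a0 ω‖ ^ 2) μ :=
    (memLp_two_iff_integrable_sq_norm ha0_L2.1).mp ha0_L2
  -- one-step inequality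
  have hstep : ∀ i (k : Fin K),
      ∫ ω, ‖X i ((k:ℕ)+1) ω - x‖ ^ 2 ∂μ
        ≤ ∫ ω, ‖X i (k:ℕ) ω - x‖ ^ 2 ∂μ
          + 2 * η * (∫ ω, ‖a0 ω‖ * ‖X i (k:ℕ) ω - x‖ ∂μ) + 2 * η ^ 2 * Γ + η ^ 2 * σ ^ 2 := by
    intro i k
    have hnK : (k:ℕ) < K := k.isLt
    have hW2 : MemLp (fun ω => X i (k:ℕ) ω - x) 2 μ :=
      (hX_L2 i (k:ℕ) hnK.le).sub (memLp_const x)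
    have hG2 : MemLp (fun ω => gradient Ff (X i (k:ℕ) ω)) 2 μ := hG_L2 i (k:ℕ) hnK.le
    have hξ2 : MemLp (fun ω => g i k ω - gradient Ff (X i (k:ℕ) ω)) 2 μ := (hg_L2 i k).sub hG2
    have hA2 : MemLp (fun ω => gradient Ff (X i (k:ℕ) ω) + gc ω) 2 μ := hG2.add hgc_L2
    have hY2 : MemLp (fun ω => (2*η^2) • (gradient Ff (X i (k:ℕ) ω) + gc ω)
        - (2*η) • (X i (k:ℕ) ω - x)) 2 μ := (hA2.const_smul _).sub (hW2.const_smul _)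
    have hX'2 : MemLp (fun ω => X i ((k:ℕ)+1) ω - x) 2 μ :=
      (hX_L2 i ((k:ℕ)+1) hnK).sub (memLp_const x)
    have hW_sm : StronglyMeasurable[mixedFLPast gc g i k] (fun ω => X i (k:ℕ) ω - x) :=
      (hX_sm i k (k:ℕ) le_rfl).sub stronglyMeasurable_const
    have hGsm : StronglyMeasurable[mixedFLPast gc g i k]
        (fun ω => gradient Ff (X i (k:ℕ) ω)) :=
      hgradFf_cont.comp_stronglyMeasurable (hX_sm i k (k:ℕ) le_rfl)
    have hY_sm : StronglyMeasurable[mixedFLPast gc g i k]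
        (fun ω => (2*η^2) • (gradient Ff (X i (k:ℕ) ω) + gc ω)
          - (2*η) • (X i (k:ℕ) ω - x)) :=
      ((hGsm.add (hgc_sm i k)).const_smul _).sub (hW_sm.const_smul _)
    -- pointwise bound
    have hpt : ∀ ω, ‖X i ((k:ℕ)+1) ω - x‖ ^ 2
        ≤ ‖X i (k:ℕ) ω - x‖ ^ 2 + 2*η*(‖a0 ω‖ * ‖X i (k:ℕ) ω - x‖)
          + 2*η^2*‖a0 ω‖^2 + η^2*‖g i k ω - gradient Ff (X i (k:ℕ) ω)‖^2
          + ⟪g i k ω - gradient Ff (X i (k:ℕ) ω),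
              (2*η^2) • (gradient Ff (X i (k:ℕ) ω) + gc ω)
                - (2*η) • (X i (k:ℕ) ω - x)⟫_ℝ := by
      intro ω
      have hXeq : X i ((k:ℕ)+1) ω - x = (X i (k:ℕ) ω - x) - η • (g i k ω + gc ω) := by
        rw [hXstep i k]
        show X i (k:ℕ) ω - η • (g i k ω + gc ω) - x = _
        abel
      rw [hXeq]
      exact owgt_pointwise hη hβ hηβ (X i (k:ℕ) ω - x) (gradient Ff (X i (k:ℕ) ω))
        (gradient Ff x) (gc ω) (g i k ω) (hco (X i (k:ℕ) ω) x)
    -- integrability of all pieces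
    have hint_L : Integrable (fun ω => ‖X i ((k:ℕ)+1) ω - x‖ ^ 2) μ :=
      (memLp_two_iff_integrable_sq_norm hX'2.1).mp hX'2
    have hint_W2 : Integrable (fun ω => ‖X i (k:ℕ) ω - x‖ ^ 2) μ :=
      (memLp_two_iff_integrable_sq_norm hW2.1).mp hW2
    have hint_cross : Integrable (fun ω => ‖a0 ω‖ * ‖X i (k:ℕ) ω - x‖) μ :=
      owgt_integrable_mul_L2 ha0_L2.norm hW2.norm
    have hint_xi2 : Integrable (fun ω => ‖g i k ω - gradient Ff (X i (k:ℕ) ω)‖ ^ 2) μ :=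
      (memLp_two_iff_integrable_sq_norm hξ2.1).mp hξ2
    have hint_inner : Integrable (fun ω => ⟪g i k ω - gradient Ff (X i (k:ℕ) ω),
        (2*η^2) • (gradient Ff (X i (k:ℕ) ω) + gc ω) - (2*η) • (X i (k:ℕ) ω - x)⟫_ℝ) μ :=
      owgt_integrable_inner_L2 hξ2 hY2
    have hint_R : Integrable (fun ω => ‖X i (k:ℕ) ω - x‖ ^ 2
        + 2*η*(‖a0 ω‖ * ‖X i (k:ℕ) ω - x‖) + 2*η^2*‖a0 ω‖^2
        + η^2*‖g i k ω - gradient Ff (X i (k:ℕ) ω)‖^2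
        + ⟪g i k ω - gradient Ff (X i (k:ℕ) ω),
            (2*η^2) • (gradient Ff (X i (k:ℕ) ω) + gc ω)
              - (2*η) • (X i (k:ℕ) ω - x)⟫_ℝ) μ :=
      (((hint_W2.add (hint_cross.const_mul _)).add (ha0sq_int.const_mul _)).add
        (hint_xi2.const_mul _)).add hint_inner
    have hIle := integral_mono hint_L hint_R hpt
    have hbig2 : Integrable (fun ω => ‖X i (k:ℕ) ω - x‖ ^ 2
        + 2*η*(‖a0 ω‖ * ‖X i (k:ℕ) ω - x‖)) μ := hint_W2.add (hint_cross.const_mul _)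
    have hbig3 : Integrable (fun ω => ‖X i (k:ℕ) ω - x‖ ^ 2
        + 2*η*(‖a0 ω‖ * ‖X i (k:ℕ) ω - x‖) + 2*η^2*‖a0 ω‖^2) μ :=
      hbig2.add (ha0sq_int.const_mul _)
    have hbig4 : Integrable (fun ω => ‖X i (k:ℕ) ω - x‖ ^ 2
        + 2*η*(‖a0 ω‖ * ‖X i (k:ℕ) ω - x‖) + 2*η^2*‖a0 ω‖^2
        + η^2*‖g i k ω - gradient Ff (X i (k:ℕ) ω)‖^2) μ :=
      hbig3.add (hint_xi2.const_mul _)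
    have e5 : ∫ ω, (‖X i (k:ℕ) ω - x‖ ^ 2
        + 2*η*(‖a0 ω‖ * ‖X i (k:ℕ) ω - x‖) + 2*η^2*‖a0 ω‖^2
        + η^2*‖g i k ω - gradient Ff (X i (k:ℕ) ω)‖^2
        + ⟪g i k ω - gradient Ff (X i (k:ℕ) ω),
            (2*η^2) • (gradient Ff (X i (k:ℕ) ω) + gc ω)
              - (2*η) • (X i (k:ℕ) ω - x)⟫_ℝ) ∂μ
        = (∫ ω, (‖X i (k:ℕ) ω - x‖ ^ 2
            + 2*η*(‖a0 ω‖ * ‖X i (k:ℕ) ω - x‖) + 2*η^2*‖a0 ω‖^2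
            + η^2*‖g i k ω - gradient Ff (X i (k:ℕ) ω)‖^2) ∂μ)
          + ∫ ω, ⟪g i k ω - gradient Ff (X i (k:ℕ) ω),
              (2*η^2) • (gradient Ff (X i (k:ℕ) ω) + gc ω)
                - (2*η) • (X i (k:ℕ) ω - x)⟫_ℝ ∂μ := integral_add hbig4 hint_inner
    have e4 : ∫ ω, (‖X i (k:ℕ) ω - x‖ ^ 2
        + 2*η*(‖a0 ω‖ * ‖X i (k:ℕ) ω - x‖) + 2*η^2*‖a0 ω‖^2
        + η^2*‖g i k ω - gradient Ff (X i (k:ℕ) ω)‖^2) ∂μ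
        = (∫ ω, (‖X i (k:ℕ) ω - x‖ ^ 2
            + 2*η*(‖a0 ω‖ * ‖X i (k:ℕ) ω - x‖) + 2*η^2*‖a0 ω‖^2) ∂μ)
          + ∫ ω, η^2*‖g i k ω - gradient Ff (X i (k:ℕ) ω)‖^2 ∂μ :=
      integral_add hbig3 (hint_xi2.const_mul _)
    have e3 : ∫ ω, (‖X i (k:ℕ) ω - x‖ ^ 2
        + 2*η*(‖a0 ω‖ * ‖X i (k:ℕ) ω - x‖) + 2*η^2*‖a0 ω‖^2) ∂μ
        = (∫ ω, (‖X i (k:ℕ) ω - x‖ ^ 2 + 2*η*(‖a0 ω‖ * ‖X i (k:ℕ) ω - x‖)) ∂μ)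
          + ∫ ω, 2*η^2*‖a0 ω‖^2 ∂μ := integral_add hbig2 (ha0sq_int.const_mul _)
    have e2 : ∫ ω, (‖X i (k:ℕ) ω - x‖ ^ 2 + 2*η*(‖a0 ω‖ * ‖X i (k:ℕ) ω - x‖)) ∂μ
        = (∫ ω, ‖X i (k:ℕ) ω - x‖ ^ 2 ∂μ)
          + ∫ ω, 2*η*(‖a0 ω‖ * ‖X i (k:ℕ) ω - x‖) ∂μ :=
      integral_add hint_W2 (hint_cross.const_mul _)
    have c1 : ∫ ω, 2*η*(‖a0 ω‖ * ‖X i (k:ℕ) ω - x‖) ∂μ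
        = 2*η*∫ ω, ‖a0 ω‖ * ‖X i (k:ℕ) ω - x‖ ∂μ := integral_const_mul _ _
    have c2 : ∫ ω, 2*η^2*‖a0 ω‖^2 ∂μ = 2*η^2*Γ := by
      rw [integral_const_mul]
    have c3 : ∫ ω, η^2*‖g i k ω - gradient Ff (X i (k:ℕ) ω)‖^2 ∂μ
        = η^2*∫ ω, ‖g i k ω - gradient Ff (X i (k:ℕ) ω)‖^2 ∂μ := integral_const_mul _ _
    have hsplit : ∫ ω, (‖X i (k:ℕ) ω - x‖ ^ 2
        + 2*η*(‖a0 ω‖ * ‖X i (k:ℕ) ω - x‖) + 2*η^2*‖a0 ω‖^2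
        + η^2*‖g i k ω - gradient Ff (X i (k:ℕ) ω)‖^2
        + ⟪g i k ω - gradient Ff (X i (k:ℕ) ω),
            (2*η^2) • (gradient Ff (X i (k:ℕ) ω) + gc ω)
              - (2*η) • (X i (k:ℕ) ω - x)⟫_ℝ) ∂μ
        = (∫ ω, ‖X i (k:ℕ) ω - x‖ ^ 2 ∂μ)
          + 2*η*(∫ ω, ‖a0 ω‖ * ‖X i (k:ℕ) ω - x‖ ∂μ) + 2*η^2*Γ
          + η^2*(∫ ω, ‖g i k ω - gradient Ff (X i (k:ℕ) ω)‖ ^ 2 ∂μ)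
          + ∫ ω, ⟪g i k ω - gradient Ff (X i (k:ℕ) ω),
              (2*η^2) • (gradient Ff (X i (k:ℕ) ω) + gc ω)
                - (2*η) • (X i (k:ℕ) ω - x)⟫_ℝ ∂μ := by
      rw [e5, e4, e3, e2, c1, c2, c3]
    -- the noise cross term vanishes
    have hcross0 : ∫ ω, ⟪g i k ω - gradient Ff (X i (k:ℕ) ω),
        (2*η^2) • (gradient Ff (X i (k:ℕ) ω) + gc ω)
          - (2*η) • (X i (k:ℕ) ω - x)⟫_ℝ ∂μ = 0 := by
      have h1 : ∫ ω, ⟪g i k ω, (2*η^2) • (gradient Ff (X i (k:ℕ) ω) + gc ω)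
          - (2*η) • (X i (k:ℕ) ω - x)⟫_ℝ ∂μ
          = ∫ ω, ⟪(μ[g i k | mixedFLPast gc g i k]) ω,
              (2*η^2) • (gradient Ff (X i (k:ℕ) ω) + gc ω)
                - (2*η) • (X i (k:ℕ) ω - x)⟫_ℝ ∂μ :=
        owgt_integral_inner_condexp (hm_le i k) (hg_L2 i k) hY2 hY_sm
      have h2 : ∫ ω, ⟪(μ[g i k | mixedFLPast gc g i k]) ω,
          (2*η^2) • (gradient Ff (X i (k:ℕ) ω) + gc ω)
            - (2*η) • (X i (k:ℕ) ω - x)⟫_ℝ ∂μ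
          = ∫ ω, ⟪gradient Ff (X i (k:ℕ) ω),
              (2*η^2) • (gradient Ff (X i (k:ℕ) ω) + gc ω)
                - (2*η) • (X i (k:ℕ) ω - x)⟫_ℝ ∂μ := by
        refine integral_congr_ae ?_
        filter_upwards [hg_condmean i k] with ω hω
        rw [hω]
      have h3 : ∫ ω, ⟪g i k ω - gradient Ff (X i (k:ℕ) ω),
          (2*η^2) • (gradient Ff (X i (k:ℕ) ω) + gc ω)
            - (2*η) • (X i (k:ℕ) ω - x)⟫_ℝ ∂μ
          = (∫ ω, ⟪g i k ω, (2*η^2) • (gradient Ff (X i (k:ℕ) ω) + gc ω)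
              - (2*η) • (X i (k:ℕ) ω - x)⟫_ℝ ∂μ)
            - ∫ ω, ⟪gradient Ff (X i (k:ℕ) ω),
                (2*η^2) • (gradient Ff (X i (k:ℕ) ω) + gc ω)
                  - (2*η) • (X i (k:ℕ) ω - x)⟫_ℝ ∂μ := by
        rw [← integral_sub (owgt_integrable_inner_L2 (hg_L2 i k) hY2)
          (owgt_integrable_inner_L2 hG2 hY2)]
        refine integral_congr_ae (Filter.Eventually.of_forall fun ω => ?_)
        exact inner_sub_left _ _ _
      rw [h3, h1, h2, sub_self]
    -- conditional variance bound
    have hvar : ∫ ω, ‖g i k ω - gradient Ff (X i (k:ℕ) ω)‖ ^ 2 ∂μ ≤ σ ^ 2 := by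
      have h1 : ∫ ω, ‖g i k ω - gradient Ff (X i (k:ℕ) ω)‖ ^ 2 ∂μ
          = ∫ ω, (μ[(fun ω' => ‖g i k ω' - gradient Ff (X i (k : ℕ) ω')‖ ^ 2) |
              mixedFLPast gc g i k]) ω ∂μ := by
        haveI : IsFiniteMeasure (μ.trim (hm_le i k)) := isFiniteMeasure_trim (hm_le i k)
        exact (integral_condExp (hm_le i k)).symm
      have h2 : ∫ ω, (μ[(fun ω' => ‖g i k ω' - gradient Ff (X i (k : ℕ) ω')‖ ^ 2) |
          mixedFLPast gc g i k]) ω ∂μ ≤ ∫ _ω, σ ^ 2 ∂μ :=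
        integral_mono_ae integrable_condExp (integrable_const _) (hg_condvar i k)
      have h3 : ∫ _ω, σ ^ 2 ∂μ = σ ^ 2 := by simp
      linarith
    rw [hsplit, hcross0] at hIle
    have h4 : η^2*(∫ ω, ‖g i k ω - gradient Ff (X i (k:ℕ) ω)‖ ^ 2 ∂μ) ≤ η^2*σ^2 :=
      mul_le_mul_of_nonneg_left hvar (sq_nonneg η)
    linarith
  -- drift recursion
  have hΔ : ∀ i (l : ℕ), l ≤ K →
      ∫ ω, ‖X i l ω - x‖ ^ 2 ∂μ ≤ 3*(l:ℝ)^2*η^2*Γ + 2*(l:ℝ)*η^2*σ^2 := by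
    intro i l
    induction l with
    | zero =>
      intro _
      rw [hX0 i]
      simp
    | succ n ih =>
      intro hn
      have hnK : n < K := hn
      have hs' : ∫ ω, ‖X i (n+1) ω - x‖ ^ 2 ∂μ
          ≤ ∫ ω, ‖X i n ω - x‖ ^ 2 ∂μ
            + 2 * η * (∫ ω, ‖a0 ω‖ * ‖X i n ω - x‖ ∂μ) + 2 * η ^ 2 * Γ + η ^ 2 * σ ^ 2 :=
        hstep i ⟨n, hnK⟩
      have hΔn := ih hnK.le
      have hΔn0 : 0 ≤ ∫ ω, ‖X i n ω - x‖ ^ 2 ∂μ := integral_nonneg fun ω => sq_nonneg _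
      have hq1 : 0 ≤ η^2*Γ := mul_nonneg (sq_nonneg η) hΓ0
      have hq2 : 0 ≤ η^2*σ^2 := mul_nonneg (sq_nonneg η) hσ2nonneg
      rcases Nat.eq_zero_or_pos n with hn0 | hn1
      · subst hn0
        have hCI : ∫ ω, ‖a0 ω‖ * ‖X i 0 ω - x‖ ∂μ = 0 := by
          rw [hX0 i]; simp
        have hDz : ∫ ω, ‖X i 0 ω - x‖ ^ 2 ∂μ = 0 := by
          rw [hX0 i]; simp
        rw [hDz, hCI] at hs'
        push_cast
        nlinarith [hs', hq1, hq2]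
      · have hL1 : (1:ℝ) ≤ (n:ℝ) := by exact_mod_cast hn1
        have hLpos : (0:ℝ) < (n:ℝ) := lt_of_lt_of_le one_pos hL1
        have hXnL2 : MemLp (fun ω => X i n ω - x) 2 μ :=
          (hX_L2 i n hnK.le).sub (memLp_const x)
        have hint_cross : Integrable (fun ω => ‖a0 ω‖ * ‖X i n ω - x‖) μ :=
          owgt_integrable_mul_L2 ha0_L2.norm hXnL2.norm
        have hint_W2 : Integrable (fun ω => ‖X i n ω - x‖ ^ 2) μ :=
          (memLp_two_iff_integrable_sq_norm hXnL2.1).mp hXnL2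
        have hCI4 : 4*(n:ℝ)*η*(∫ ω, ‖a0 ω‖ * ‖X i n ω - x‖ ∂μ)
            ≤ 4*(n:ℝ)^2*η^2*Γ + ∫ ω, ‖X i n ω - x‖ ^ 2 ∂μ := by
          have hptc : ∀ ω, 4*(n:ℝ)*η*(‖a0 ω‖ * ‖X i n ω - x‖)
              ≤ 4*(n:ℝ)^2*η^2*‖a0 ω‖^2 + ‖X i n ω - x‖^2 := by
            intro ω
            nlinarith [sq_nonneg (2*(n:ℝ)*η*‖a0 ω‖ - ‖X i n ω - x‖)]
          have hIle2 : ∫ ω, 4*(n:ℝ)*η*(‖a0 ω‖ * ‖X i n ω - x‖) ∂μ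
              ≤ ∫ ω, (4*(n:ℝ)^2*η^2*‖a0 ω‖^2 + ‖X i n ω - x‖^2) ∂μ :=
            integral_mono (hint_cross.const_mul (4*(n:ℝ)*η))
              ((ha0sq_int.const_mul (4*(n:ℝ)^2*η^2)).add hint_W2) hptc
          rw [integral_const_mul] at hIle2
          have e6a : ∫ ω, (4*(n:ℝ)^2*η^2*‖a0 ω‖^2 + ‖X i n ω - x‖^2) ∂μ
              = (∫ ω, 4*(n:ℝ)^2*η^2*‖a0 ω‖^2 ∂μ) + ∫ ω, ‖X i n ω - x‖^2 ∂μ :=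
            integral_add (ha0sq_int.const_mul _) hint_W2
          have e6 : ∫ ω, (4*(n:ℝ)^2*η^2*‖a0 ω‖^2 + ‖X i n ω - x‖^2) ∂μ
              = 4*(n:ℝ)^2*η^2*Γ + ∫ ω, ‖X i n ω - x‖ ^ 2 ∂μ := by
            rw [e6a, integral_const_mul, hΓdef]
          rw [e6] at hIle2
          exact hIle2
        have hd1 : 2*η*(∫ ω, ‖a0 ω‖ * ‖X i n ω - x‖ ∂μ)
            ≤ 2*(n:ℝ)*η^2*Γ + (1/(2*(n:ℝ)))*(∫ ω, ‖X i n ω - x‖ ^ 2 ∂μ) := by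
          have h := mul_le_mul_of_nonneg_left hCI4
            (le_of_lt (by positivity : (0:ℝ) < 1/(2*(n:ℝ))))
          have e7 : (1/(2*(n:ℝ)))*(4*(n:ℝ)*η*(∫ ω, ‖a0 ω‖ * ‖X i n ω - x‖ ∂μ))
              = 2*η*(∫ ω, ‖a0 ω‖ * ‖X i n ω - x‖ ∂μ) := by field_simp; ring
          have e8 : (1/(2*(n:ℝ)))*(4*(n:ℝ)^2*η^2*Γ + ∫ ω, ‖X i n ω - x‖ ^ 2 ∂μ)
              = 2*(n:ℝ)*η^2*Γ + (1/(2*(n:ℝ)))*(∫ ω, ‖X i n ω - x‖ ^ 2 ∂μ) := by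
            field_simp; ring
          rw [e7, e8] at h
          exact h
        have hd2 : (1/(2*(n:ℝ)))*(∫ ω, ‖X i n ω - x‖ ^ 2 ∂μ)
            ≤ (3/2)*(n:ℝ)*η^2*Γ + η^2*σ^2 := by
          have h := mul_le_mul_of_nonneg_left hΔn
            (le_of_lt (by positivity : (0:ℝ) < 1/(2*(n:ℝ))))
          have e9 : (1/(2*(n:ℝ)))*(3*(n:ℝ)^2*η^2*Γ + 2*(n:ℝ)*η^2*σ^2)
              = (3/2)*(n:ℝ)*η^2*Γ + η^2*σ^2 := by field_simp
          rw [e9] at h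
          exact h
        have hq3 : 0 ≤ (n:ℝ)*(η^2*Γ) := mul_nonneg (by positivity) hq1
        push_cast
        nlinarith [hs', hd1, hd2, hΔn, hq1, hq2, hq3]
  -- bound on Γ
  have hgcint : Integrable gc μ := hgc_L2.integrable one_le_two
  have hζint : Integrable (fun ω => gc ω - gradient Fc x) μ := hgcint.sub (integrable_const _)
  have hζ2 : MemLp (fun ω => gc ω - gradient Fc x) 2 μ := hgc_L2.sub (memLp_const (gradient Fc x))
  have hζsq_int : Integrable (fun ω => ‖gc ω - gradient Fc x‖ ^ 2) μ :=
    (memLp_two_iff_integrable_sq_norm hζ2.1).mp hζ2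
  have hζmean : ∫ ω, (gc ω - gradient Fc x) ∂μ = 0 := by
    rw [integral_sub hgcint (integrable_const _), hgc_mean, integral_const]
    simp
  have hζinner_int : Integrable
      (fun ω => ⟪gradient Ff x + gradient Fc x, gc ω - gradient Fc x⟫_ℝ) μ :=
    hζint.const_inner _
  have hΓeq : Γ = ‖gradient Ff x + gradient Fc x‖^2
      + ∫ ω, ‖gc ω - gradient Fc x‖ ^ 2 ∂μ := by
    have hpt2 : ∀ ω, ‖a0 ω‖^2 = ‖gradient Ff x + gradient Fc x‖^2
        + 2*⟪gradient Ff x + gradient Fc x, gc ω - gradient Fc x⟫_ℝ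
        + ‖gc ω - gradient Fc x‖^2 := by
      intro ω
      have h : a0 ω = (gradient Ff x + gradient Fc x) + (gc ω - gradient Fc x) := by
        simp only [ha0def]; abel
      rw [h, norm_add_sq_real]
    have e1 : Γ = ∫ ω, (‖gradient Ff x + gradient Fc x‖^2
        + 2*⟪gradient Ff x + gradient Fc x, gc ω - gradient Fc x⟫_ℝ
        + ‖gc ω - gradient Fc x‖^2) ∂μ := by
      rw [hΓdef]
      exact integral_congr_ae (Filter.Eventually.of_forall hpt2)
    have a1 : ∫ ω, (‖gradient Ff x + gradient Fc x‖^2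
        + 2*⟪gradient Ff x + gradient Fc x, gc ω - gradient Fc x⟫_ℝ
        + ‖gc ω - gradient Fc x‖^2) ∂μ
        = (∫ ω, (‖gradient Ff x + gradient Fc x‖^2
            + 2*⟪gradient Ff x + gradient Fc x, gc ω - gradient Fc x⟫_ℝ) ∂μ)
          + ∫ ω, ‖gc ω - gradient Fc x‖^2 ∂μ :=
      integral_add ((integrable_const _).add (hζinner_int.const_mul 2)) hζsq_int
    have a2 : ∫ ω, (‖gradient Ff x + gradient Fc x‖^2
        + 2*⟪gradient Ff x + gradient Fc x, gc ω - gradient Fc x⟫_ℝ) ∂μ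
        = (∫ _ω, ‖gradient Ff x + gradient Fc x‖^2 ∂μ)
          + ∫ ω, 2*⟪gradient Ff x + gradient Fc x, gc ω - gradient Fc x⟫_ℝ ∂μ :=
      integral_add (integrable_const _) (hζinner_int.const_mul 2)
    rw [e1, a1, a2, integral_const, integral_const_mul, integral_inner hζint, hζmean]
    simp
  -- gradient norm at x is controlled by suboptimality
  have hfgrad : ∀ w, HasGradientAt (fun y => Ff y + Fc y)
      (gradient Ff w + gradient Fc w) w := by
    intro w
    rw [hasGradientAt_iff_hasFDerivAt, map_add]
    exact (hasGradientAt_iff_hasFDerivAt.mp (hFf_diff w).hasGradientAt).add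
      (hasGradientAt_iff_hasFDerivAt.mp (hFc_diff w).hasGradientAt)
  have hflip : ∀ u w, ‖(gradient Ff u + gradient Fc u) - (gradient Ff w + gradient Fc w)‖
      ≤ (2*β) * ‖u - w‖ := by
    intro u w
    have h1 := hFf_smooth u w
    have h2 := hFc_smooth u w
    have h3 : (gradient Ff u + gradient Fc u) - (gradient Ff w + gradient Fc w)
        = (gradient Ff u - gradient Ff w) + (gradient Fc u - gradient Fc w) := by abel
    rw [h3]
    calc ‖(gradient Ff u - gradient Ff w) + (gradient Fc u - gradient Fc w)‖
        ≤ ‖gradient Ff u - gradient Ff w‖ + ‖gradient Fc u - gradient Fc w‖ :=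
          norm_add_le _ _
      _ ≤ (2*β) * ‖u - w‖ := by linarith
  have hvle : ‖gradient Ff x + gradient Fc x‖^2
      ≤ 4*β*((Ff x + Fc x) - (Ff xs + Fc xs)) := by
    set v := gradient Ff x + gradient Fc x with hvdef
    have hub := owgt_smooth_ub (φ := fun y => Ff y + Fc y)
      (φ' := fun w => gradient Ff w + gradient Fc w)
      (by positivity : (0:ℝ) < 2*β) hfgrad hflip x (x - (1/(2*β)) • v)
    rw [← hvdef] at hub
    have hz : (x - (1/(2*β)) • v) - x = -((1/(2*β)) • v) := by abel
    rw [hz] at hub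
    have h4 : ⟪v, -((1/(2*β)) • v)⟫_ℝ = -((1/(2*β)) * ‖v‖^2) := by
      rw [inner_neg_right, real_inner_smul_right, real_inner_self_eq_norm_sq]
    have h5 : ‖-((1/(2*β)) • v)‖^2 = (1/(2*β))^2 * ‖v‖^2 := by
      rw [norm_neg, norm_smul, mul_pow, Real.norm_eq_abs, sq_abs]
    rw [h4, h5] at hub
    have h6 := hxs (x - (1/(2*β)) • v)
    have hβne : β ≠ 0 := hβ.ne'
    have e : Ff x + Fc x + -(1/(2*β) * ‖v‖^2) + 2*β/2 * ((1/(2*β))^2*‖v‖^2)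
        = Ff x + Fc x - (1/(4*β))*‖v‖^2 := by field_simp; ring
    have h7 : (1/(4*β))*‖v‖^2 ≤ (Ff x + Fc x) - (Ff xs + Fc xs) := by
      linarith [hub, h6, e.le, e.ge]
    have h8 := mul_le_mul_of_nonneg_left h7 (by positivity : (0:ℝ) ≤ 4*β)
    have e2 : 4*β*((1/(4*β))*‖v‖^2) = ‖v‖^2 := by field_simp
    linarith [h8, e2.le, e2.ge]
  have hΓle : Γ ≤ 4*β*((Ff x + Fc x) - (Ff xs + Fc xs)) + σc^2 := by
    rw [hΓeq]; linarith [hgc_var, hvle]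
  have hD0' : 0 ≤ (Ff x + Fc x) - (Ff xs + Fc xs) := by linarith [hxs x]
  have hσc0 : 0 ≤ σc^2 := le_trans (integral_nonneg fun ω => sq_nonneg _) hgc_var
  -- sum over local steps
  have hsum_k : ∀ i : Fin S, (∑ k : Fin K, ∫ ω, ‖X i (k:ℕ) ω - x‖ ^ 2 ∂μ)
      ≤ η^2*Γ*(K:ℝ)^3 + η^2*σ^2*(K:ℝ)^2 := by
    intro i
    have h1 : (∑ k : Fin K, ∫ ω, ‖X i (k:ℕ) ω - x‖ ^ 2 ∂μ)
        ≤ ∑ k : Fin K, (3*((k:ℕ):ℝ)^2*η^2*Γ + 2*((k:ℕ):ℝ)*η^2*σ^2) :=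
      Finset.sum_le_sum fun k _ => hΔ i (k:ℕ) k.isLt.le
    have h2 : (∑ k : Fin K, (3*((k:ℕ):ℝ)^2*η^2*Γ + 2*((k:ℕ):ℝ)*η^2*σ^2))
        = ∑ k ∈ Finset.range K, (3*(k:ℝ)^2*η^2*Γ + 2*(k:ℝ)*η^2*σ^2) :=
      Fin.sum_univ_eq_sum_range (fun k => 3*(k:ℝ)^2*η^2*Γ + 2*(k:ℝ)*η^2*σ^2) K
    have h3 : (∑ k ∈ Finset.range K, (3*(k:ℝ)^2*η^2*Γ + 2*(k:ℝ)*η^2*σ^2))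
        = 3*η^2*Γ*(∑ k ∈ Finset.range K, (k:ℝ)^2)
          + 2*η^2*σ^2*(∑ k ∈ Finset.range K, (k:ℝ)) := by
      rw [Finset.sum_add_distrib, Finset.mul_sum, Finset.mul_sum]
      congr 1
      · exact Finset.sum_congr rfl fun k _ => by ring
      · exact Finset.sum_congr rfl fun k _ => by ring
    have h4 : 3*η^2*Γ*(∑ k ∈ Finset.range K, (k:ℝ)^2) ≤ 3*η^2*Γ*((K:ℝ)^3/3) :=
      mul_le_mul_of_nonneg_left (owgt_sum_range_sq_le K)
        (mul_nonneg (by positivity) hΓ0)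
    have h5 : 2*η^2*σ^2*(∑ k ∈ Finset.range K, (k:ℝ)) ≤ 2*η^2*σ^2*((K:ℝ)^2/2) :=
      mul_le_mul_of_nonneg_left (owgt_sum_range_le K) (by positivity)
    have e6 : 3*η^2*Γ*((K:ℝ)^3/3) = η^2*Γ*(K:ℝ)^3 := by ring
    have e7 : 2*η^2*σ^2*((K:ℝ)^2/2) = η^2*σ^2*(K:ℝ)^2 := by ring
    linarith [h1, h2.le, h2.ge, h3.le, h3.ge, h4, h5, e6.le, e6.ge, e7.le, e7.ge]
  have hKpos : (0:ℝ) < (K:ℝ) := by exact_mod_cast Nat.lt_of_lt_of_le Nat.zero_lt_one hK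
  have hSpos : (0:ℝ) < (S:ℝ) := by exact_mod_cast Nat.lt_of_lt_of_le Nat.zero_lt_one hS
  have hsum_all : (∑ i : Fin S, ∑ k : Fin K, ∫ ω, ‖X i (k:ℕ) ω - x‖ ^ 2 ∂μ)
      ≤ (S:ℝ)*(η^2*Γ*(K:ℝ)^3 + η^2*σ^2*(K:ℝ)^2) := by
    calc (∑ i : Fin S, ∑ k : Fin K, ∫ ω, ‖X i (k:ℕ) ω - x‖ ^ 2 ∂μ)
        ≤ ∑ _i : Fin S, (η^2*Γ*(K:ℝ)^3 + η^2*σ^2*(K:ℝ)^2) :=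
          Finset.sum_le_sum fun i _ => hsum_k i
      _ = (S:ℝ)*(η^2*Γ*(K:ℝ)^3 + η^2*σ^2*(K:ℝ)^2) := by
          rw [Finset.sum_const, Finset.card_univ, Fintype.card_fin, nsmul_eq_mul]
  have hdle : drift ≤ η^2*Γ*(K:ℝ)^2 + η^2*σ^2*(K:ℝ) := by
    rw [hdrift]
    have h1 := mul_le_mul_of_nonneg_left hsum_all
      (le_of_lt (by positivity : (0:ℝ) < 1/((K:ℝ)*(S:ℝ))))
    have e : (1/((K:ℝ)*(S:ℝ)))*((S:ℝ)*(η^2*Γ*(K:ℝ)^3 + η^2*σ^2*(K:ℝ)^2))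
        = η^2*Γ*(K:ℝ)^2 + η^2*σ^2*(K:ℝ) := by field_simp
    rw [e] at h1
    exact h1
  have hΓK := mul_le_mul_of_nonneg_left hΓle (by positivity : (0:ℝ) ≤ η^2*(K:ℝ)^2)
  have efin : 2*(K:ℝ)^2*η^2*((1/(K:ℝ))*σ^2 + σc^2)
      = 2*(K:ℝ)*η^2*σ^2 + 2*(K:ℝ)^2*η^2*σc^2 := by field_simp
  have q1 : 0 ≤ (K:ℝ)^2*η^2*(β*((Ff x + Fc x) - (Ff xs + Fc xs))) :=
    mul_nonneg (by positivity) (mul_nonneg hβ.le hD0')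
  have q2 : 0 ≤ (K:ℝ)*η^2*σ^2 := by positivity
  have q3 : 0 ≤ (K:ℝ)^2*η^2*σc^2 := mul_nonneg (by positivity) hσc0
  rw [efin]
  nlinarith [hdle, hΓK, q1, q2, q3]
end

section
/- Bounded client drift for 1-way Gradient Transfer (non-convex case, Lemma): in one round of 1-way Gradient Transfer, suppose F_f is β-smooth, the server learning rate satisfies η_s ≥ 1, and η̃ ≤ 1/(18β). Then the client drift satisfies ℰ ≤ (4η̃/(9 β η_s²)) ‖∇f(x)‖² + (2η̃²/η_s²) ((1/K) σ² + 4 σ_c²). -/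
open MeasureTheory
open scoped RealInnerProductSpace

section Aux

variable {Ω E : Type*} [NormedAddCommGroup E] [InnerProductSpace ℝ E]

lemma integrable_inner_of_memL2 [MeasurableSpace Ω] {μ : Measure Ω} {f h : Ω → E}
    (hf : MemLp f 2 μ) (hh : MemLp h 2 μ) :
    Integrable (fun ω => ⟪f ω, h ω⟫) μ := by
  have := L2.integrable_inner (𝕜 := ℝ) (hf.toLp f) (hh.toLp h)
  apply this.congr
  filter_upwards [hf.coeFn_toLp, hh.coeFn_toLp] with ω h1 h2
  rw [h1, h2]

lemma integrable_mul_of_memL2 [MeasurableSpace Ω] {μ : Measure Ω} {f h : Ω → ℝ}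
    (hf : MemLp f 2 μ) (hh : MemLp h 2 μ) :
    Integrable (fun ω => f ω * h ω) μ := by
  have := integrable_inner_of_memL2 (E := ℝ) hf hh
  simpa [RCLike.inner_apply, mul_comm] using this

lemma integral_inner_eq_zero_of_condexp_zero [FiniteDimensional ℝ E] [MeasurableSpace E]
    [BorelSpace E]
    {m m0 : MeasurableSpace Ω} (hm : m ≤ m0) (μ : Measure Ω) [IsProbabilityMeasure μ]
    {f h : Ω → E} (hfm : StronglyMeasurable[m] f) (hf : MemLp f 2 μ) (hh : MemLp h 2 μ)
    (hcond : μ[h|m] =ᵐ[μ] 0) : ∫ ω, ⟪f ω, h ω⟫ ∂μ = 0 := by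
  classical
  set b := stdOrthonormalBasis ℝ E with hb
  have hh_int : Integrable h μ := hh.integrable one_le_two
  have hcondj : ∀ j, μ[(fun ω => ⟪b j, h ω⟫)|m] =ᵐ[μ] 0 := by
    intro j
    have hint : Integrable (fun ω => ⟪b j, h ω⟫) μ := hh_int.const_inner _
    have h0 : (0 : Ω → ℝ) =ᵐ[μ] μ[(fun ω => ⟪b j, h ω⟫)|m] := by
      refine ae_eq_condExp_of_forall_setIntegral_eq hm hint
        (fun s _ _ => (integrable_zero _ _ _).integrableOn) ?_
        (StronglyMeasurable.aestronglyMeasurable stronglyMeasurable_zero)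
      intro s hs hμs
      have hs0 : MeasurableSet s := hm s hs
      have h1 : ∫ ω in s, h ω ∂μ = 0 := by
        have h2 := setIntegral_condExp hm hh_int hs
        have h3 : ∫ ω in s, (μ[h|m]) ω ∂μ = 0 := by
          rw [setIntegral_congr_ae hs0 (hcond.mono fun ω hω _ => hω)]
          simp
        rw [← h2, h3]
      rw [integral_inner hh_int.integrableOn (b j), h1]
      simp
    exact h0.symm
  have hrepr : ∀ ω, ⟪f ω, h ω⟫ = ∑ j, ⟪f ω, b j⟫ * ⟪b j, h ω⟫ := fun ω =>
    (b.sum_inner_mul_inner (f ω) (h ω)).symm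
  have hfj : ∀ j, MemLp (fun ω => ⟪f ω, b j⟫) 2 μ := fun j => hf.inner_const _
  have hhj : ∀ j, MemLp (fun ω => ⟪b j, h ω⟫) 2 μ := fun j => hh.const_inner _
  have hint_prod : ∀ j, Integrable (fun ω => ⟪f ω, b j⟫ * ⟪b j, h ω⟫) μ := fun j =>
    integrable_mul_of_memL2 (hfj j) (hhj j)
  have hterm : ∀ j, ∫ ω, ⟪f ω, b j⟫ * ⟪b j, h ω⟫ ∂μ = 0 := by
    intro j
    have hfm_j : StronglyMeasurable[m] (fun ω => ⟪f ω, b j⟫) :=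
      hfm.inner stronglyMeasurable_const
    have hpull := condExp_mul_of_stronglyMeasurable_left (μ := μ) hfm_j
      (show Integrable ((fun ω => ⟪f ω, b j⟫) * fun ω => ⟪b j, h ω⟫) μ from hint_prod j)
      (hh_int.const_inner _)
    have hzero : μ[(fun ω => ⟪f ω, b j⟫) * (fun ω => ⟪b j, h ω⟫)|m] =ᵐ[μ] 0 := by
      refine hpull.trans ?_
      filter_upwards [hcondj j] with ω hω
      simp [hω]
    calc ∫ ω, ⟪f ω, b j⟫ * ⟪b j, h ω⟫ ∂μ
        = ∫ ω, (μ[(fun ω => ⟪f ω, b j⟫) * (fun ω => ⟪b j, h ω⟫)|m]) ω ∂μ :=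
          (integral_condExp hm).symm
      _ = 0 := by rw [integral_congr_ae hzero]; simp
  calc ∫ ω, ⟪f ω, h ω⟫ ∂μ = ∫ ω, ∑ j, ⟪f ω, b j⟫ * ⟪b j, h ω⟫ ∂μ := by
        simp_rw [hrepr]
    _ = ∑ j, ∫ ω, ⟪f ω, b j⟫ * ⟪b j, h ω⟫ ∂μ :=
        integral_finset_sum _ (fun j _ => hint_prod j)
    _ = 0 := by simp [hterm]

end Aux

set_option maxHeartbeats 4000000 in
/-- Bounded client drift for 1-way Gradient Transfer (non-convex case, Lemma): if `F_f`
is `β`-smooth, `η_s ≥ 1` and `η̃ ≤ 1/(18β)`, then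
`ℰ ≤ (4η̃/(9βη_s²))‖∇f(x)‖² + (2η̃²/η_s²)((1/K)σ² + 4σc²)`. -/
theorem owgt_bounded_drift_nonconvex
    {E : Type*} [NormedAddCommGroup E] [InnerProductSpace ℝ E] [FiniteDimensional ℝ E]
    [MeasurableSpace E] [BorelSpace E]
    {Ω : Type*} [MeasurableSpace Ω] (μ : Measure Ω) [IsProbabilityMeasure μ]
    -- current model, local steps, cohort size, learning rates, effective step size
    (x : E) (K S : ℕ) (hK : 1 ≤ K) (hS : 1 ≤ S)
    (η ηs ηt : ℝ) (hη : 0 < η) (hηs : 0 < ηs) (hηt : ηt = (K : ℝ) * ηs * η)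
    -- federated and centralized losses
    (Ff Fc : E → ℝ) (hFf_diff : Differentiable ℝ Ff) (hFc_diff : Differentiable ℝ Fc)
    (β σ σc : ℝ) (hβ : 0 < β)
    -- centralized stochastic gradient: mean ∇F_c(x), variance at most σc²
    (gc : Ω → E) (hgc_meas : Measurable gc) (hgc_L2 : MemLp gc 2 μ)
    (hgc_mean : ∫ ω, gc ω ∂μ = gradient Fc x)
    (hgc_var : ∫ ω, ‖gc ω - gradient Fc x‖ ^ 2 ∂μ ≤ σc ^ 2)
    -- client stochastic gradients
    (g : Fin S → Fin K → Ω → E)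
    (hg_meas : ∀ i k, Measurable (g i k)) (hg_L2 : ∀ i k, MemLp (g i k) 2 μ)
    -- local iterates: x_i^0 = x and x_i^{k+1} = x_i^k − η (g_i^{k+1} + g_c)
    (X : Fin S → ℕ → Ω → E)
    (hX0 : ∀ i, X i 0 = fun _ => x)
    (hXstep : ∀ i (k : Fin K),
      X i ((k : ℕ) + 1) = fun ω => X i (k : ℕ) ω - η • (g i k ω + gc ω))
    -- conditionally on the past, g i k has mean ∇F_f(x_i^k) and variance at most σ²
    (hg_condmean : ∀ i k,
      μ[g i k | mixedFLPast gc g i k] =ᵐ[μ] fun ω => gradient Ff (X i (k : ℕ) ω))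
    (hg_condvar : ∀ i k, ∀ᵐ ω ∂μ,
      (μ[(fun ω' => ‖g i k ω' - gradient Ff (X i (k : ℕ) ω')‖ ^ 2) |
          mixedFLPast gc g i k]) ω ≤ σ ^ 2)
    -- server update
    (xplus : Ω → E)
    (hxplus : xplus = fun ω =>
      x - (ηt / ((K : ℝ) * (S : ℝ))) • ∑ i : Fin S, ∑ k : Fin K, (g i k ω + gc ω))
    -- client drift
    (drift : ℝ)
    (hdrift : drift = (1 / ((K : ℝ) * (S : ℝ))) *
      ∑ i : Fin S, ∑ k : Fin K, ∫ ω, ‖X i (k : ℕ) ω - x‖ ^ 2 ∂μ)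
    -- smoothness of the federated loss
    (hFf_smooth : ∀ y z : E, ‖gradient Ff y - gradient Ff z‖ ≤ β * ‖y - z‖)
    -- server learning rate and effective step size bounds
    (hηs1 : 1 ≤ ηs) (hstep : ηt ≤ 1 / (18 * β)) :
    drift
      ≤ (4 * ηt / (9 * β * ηs ^ 2)) * ‖gradient (fun y => Ff y + Fc y) x‖ ^ 2
        + (2 * ηt ^ 2 / ηs ^ 2) * ((1 / (K : ℝ)) * σ ^ 2 + 4 * σc ^ 2) := by
  classical
  have hK0 : (0:ℝ) < K := by exact_mod_cast hK
  have hS0 : (0:ℝ) < S := by exact_mod_cast hS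
  -- gradient of the sum
  have hgrad_add : gradient (fun y => Ff y + Fc y) x = gradient Ff x + gradient Fc x := by
    unfold gradient
    rw [fderiv_fun_add (hFf_diff x) (hFc_diff x), map_add]
  set N : ℝ := ‖gradient Ff x + gradient Fc x‖ ^ 2 with hNdef
  have hN0 : 0 ≤ N := sq_nonneg _
  -- continuity of the gradient of Ff
  have hgrad_cont : Continuous (gradient Ff) := by
    have hlip : LipschitzWith (Real.toNNReal β) (gradient Ff) :=
      LipschitzWith.of_dist_le_mul fun y z => by
        simp only [dist_eq_norm]
        simpa [Real.coe_toNNReal β hβ.le] using hFf_smooth y z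
    exact hlip.continuous
  -- index sets
  set T : ℕ → Finset (Fin K) := fun k => Finset.univ.filter (fun l : Fin K => (l:ℕ) < k)
    with hTdef
  have hTmem : ∀ (k : ℕ) (l : Fin K), l ∈ T k ↔ (l:ℕ) < k := by
    intro k l; simp [hTdef]
  have hTsucc : ∀ (k : ℕ) (hk : k < K), T (k+1) = insert ⟨k, hk⟩ (T k) := by
    intro k hk
    ext l
    simp only [hTmem, Finset.mem_insert, Fin.ext_iff]
    omega
  have hTnotmem : ∀ (k : ℕ) (hk : k < K), (⟨k, hk⟩ : Fin K) ∉ T k := by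
    intro k hk; simp [hTmem]
  have hTcard : ∀ k : ℕ, k ≤ K → (T k).card = k := by
    intro k
    induction k with
    | zero => intro _; simp [hTdef]
    | succ n ih =>
      intro hk
      have hn : n < K := by omega
      rw [hTsucc n hn, Finset.card_insert_of_notMem (hTnotmem n hn), ih (by omega)]
  -- representation of the iterates
  have hXrep : ∀ (i : Fin S) (k : ℕ), k ≤ K →
      X i k = fun ω => x - η • ∑ l ∈ T k, (g i l ω + gc ω) := by
    intro i k
    induction k with
    | zero => intro _; funext ω; simp [hX0 i, hTdef]
    | succ n ih =>
      intro hk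
      have hn : n < K := by omega
      have hs := hXstep i ⟨n, hn⟩
      simp only [Fin.val_mk] at hs
      rw [hs, ih (by omega)]
      funext ω
      rw [hTsucc n hn, Finset.sum_insert (hTnotmem n hn)]
      simp only [smul_add]
      abel
  -- measurability and integrability of iterates
  have hX_meas : ∀ (i : Fin S) (k : ℕ), k ≤ K → Measurable (X i k) := by
    intro i k hk
    rw [hXrep i k hk]
    exact measurable_const.sub
      ((Finset.measurable_sum _ fun l _ => (hg_meas i l).add hgc_meas).const_smul η)
  have hXx_L2 : ∀ (i : Fin S) (k : ℕ), k ≤ K → MemLp (fun ω => X i k ω - x) 2 μ := by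
    intro i k hk
    have hsum : MemLp (fun ω => ∑ l ∈ T k, (g i l ω + gc ω)) 2 μ := by
      have hs := memLp_finset_sum' (T k) (fun l (_ : l ∈ T k) => (hg_L2 i l).add hgc_L2)
      have he : (∑ l ∈ T k, (g i l + gc)) = fun ω => ∑ l ∈ T k, (g i l ω + gc ω) := by
        funext ω; simp
      rwa [he] at hs
    have heq : (fun ω => X i k ω - x)
        = fun ω => (-η) • ∑ l ∈ T k, (g i l ω + gc ω) := by
      funext ω
      rw [hXrep i k hk]
      simp [neg_smul]
    rw [heq]
    exact hsum.const_smul _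
  have hφ_L2 : ∀ (i : Fin S) (k : ℕ), k ≤ K →
      MemLp (fun ω => gradient Ff (X i k ω)) 2 μ := by
    intro i k hk
    have hmeas : AEStronglyMeasurable (fun ω => gradient Ff (X i k ω)) μ :=
      (hgrad_cont.measurable.comp (hX_meas i k hk)).aestronglyMeasurable
    have h1 : MemLp (fun ω => gradient Ff (X i k ω) - gradient Ff x) 2 μ := by
      refine MemLp.of_le_mul (c := β) (hXx_L2 i k hk) (hmeas.sub aestronglyMeasurable_const) ?_
      filter_upwards with ω
      simpa using hFf_smooth (X i k ω) x
    have hsum2 := h1.add (memLp_const (gradient Ff x))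
    have he : (fun ω => gradient Ff (X i k ω))
        = (fun ω => gradient Ff (X i k ω) - gradient Ff x) + fun _ => gradient Ff x := by
      funext ω; simp
    rwa [← he] at hsum2
  have hξ_L2 : ∀ (i : Fin S) (l : Fin K),
      MemLp (fun ω => g i l ω - gradient Ff (X i (l:ℕ) ω)) 2 μ :=
    fun i l => (hg_L2 i l).sub (hφ_L2 i l l.isLt.le)
  -- σ-algebra facts
  have hm'le : ∀ (i : Fin S) (k : Fin K), mixedFLPast gc g i k ≤ ‹MeasurableSpace Ω› := by
    intro i k
    exact sup_le hgc_meas.comap_le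
      (iSup_le fun p => iSup_le fun _ => (hg_meas p.1 p.2).comap_le)
  have hgc_m' : ∀ (i : Fin S) (k : Fin K), Measurable[mixedFLPast gc g i k] gc :=
    fun i k => measurable_iff_comap_le.mpr le_sup_left
  have hg_m' : ∀ (i : Fin S) (k : Fin K) (l : Fin K), (l:ℕ) < (k:ℕ) →
      Measurable[mixedFLPast gc g i k] (g i l) := by
    intro i k l hl
    refine measurable_iff_comap_le.mpr (le_trans ?_ le_sup_right)
    exact le_iSup₂ (f := fun (p : Fin S × Fin K)
      (_ : (p.2 : ℕ) < (k : ℕ) ∨ ((p.2 : ℕ) = (k : ℕ) ∧ (p.1 : ℕ) < (i : ℕ))) =>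
      MeasurableSpace.comap (g p.1 p.2) inferInstance) (i, l) (Or.inl hl)
  have hX_m' : ∀ (i : Fin S) (k : Fin K) (l : ℕ), l ≤ (k:ℕ) →
      Measurable[mixedFLPast gc g i k] (X i l) := by
    intro i k l hl
    rw [hXrep i l (le_trans hl k.isLt.le)]
    refine measurable_const.sub (Measurable.const_smul ?_ η)
    refine Finset.measurable_sum _ fun j hj => ?_
    have hjl : (j:ℕ) < l := (hTmem l j).mp hj
    exact (hg_m' i k j (lt_of_lt_of_le hjl hl)).add (hgc_m' i k)
  -- conditional expectation of the noise is zero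
  have hξ_cond : ∀ (i : Fin S) (k : Fin K),
      μ[(fun ω => g i k ω - gradient Ff (X i (k:ℕ) ω)) | mixedFLPast gc g i k] =ᵐ[μ] 0 := by
    intro i k
    have hφ_sm : StronglyMeasurable[mixedFLPast gc g i k]
        (fun ω => gradient Ff (X i (k:ℕ) ω)) :=
      (hgrad_cont.measurable.comp (hX_m' i k _ le_rfl)).stronglyMeasurable
    have hφ_int : Integrable (fun ω => gradient Ff (X i (k:ℕ) ω)) μ :=
      (hφ_L2 i k k.isLt.le).integrable one_le_two
    have h1 : μ[(fun ω => g i k ω - gradient Ff (X i (k:ℕ) ω))|mixedFLPast gc g i k]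
        =ᵐ[μ] μ[g i k|mixedFLPast gc g i k]
          - μ[(fun ω => gradient Ff (X i (k:ℕ) ω))|mixedFLPast gc g i k] :=
      condExp_sub ((hg_L2 i k).integrable one_le_two) hφ_int _
    have h2 : μ[(fun ω => gradient Ff (X i (k:ℕ) ω))|mixedFLPast gc g i k]
        = fun ω => gradient Ff (X i (k:ℕ) ω) :=
      condExp_of_stronglyMeasurable (hm'le i k) hφ_sm hφ_int
    filter_upwards [h1, hg_condmean i k] with ω hω hmean
    simp only [Pi.sub_apply, h2] at hω
    simp only [Pi.zero_apply, hω, hmean, sub_self]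
  -- diagonal variance bound
  have hξ_sq_int : ∀ (i : Fin S) (l : Fin K),
      Integrable (fun ω => ‖g i l ω - gradient Ff (X i (l:ℕ) ω)‖^2) μ := fun i l =>
    (memLp_two_iff_integrable_sq_norm (hξ_L2 i l).1).mp (hξ_L2 i l)
  have hσbound : ∀ (i : Fin S) (l : Fin K),
      ∫ ω, ‖g i l ω - gradient Ff (X i (l:ℕ) ω)‖^2 ∂μ ≤ σ^2 := by
    intro i l
    rw [← integral_condExp (hm'le i l)
      (f := fun ω => ‖g i l ω - gradient Ff (X i (l:ℕ) ω)‖^2)]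
    calc ∫ ω, (μ[(fun ω' => ‖g i l ω' - gradient Ff (X i (l:ℕ) ω')‖^2)|
            mixedFLPast gc g i l]) ω ∂μ
        ≤ ∫ _, σ^2 ∂μ :=
          integral_mono_ae integrable_condExp (integrable_const _) (hg_condvar i l)
      _ = σ^2 := by simp
  -- cross terms vanish
  have hcross : ∀ (i : Fin S) (l m : Fin K), (l:ℕ) < (m:ℕ) →
      ∫ ω, ⟪g i l ω - gradient Ff (X i (l:ℕ) ω),
            g i m ω - gradient Ff (X i (m:ℕ) ω)⟫ ∂μ = 0 := by
    intro i l m hlm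
    refine integral_inner_eq_zero_of_condexp_zero (hm'le i m) μ ?_
      (hξ_L2 i l) (hξ_L2 i m) (hξ_cond i m)
    exact ((hg_m' i m l hlm).sub
      (hgrad_cont.measurable.comp (hX_m' i m l hlm.le))).stronglyMeasurable
  -- integrability of the drift integrands
  have hA_int : ∀ (i : Fin S) (k : ℕ), k ≤ K → Integrable (fun ω => ‖X i k ω - x‖^2) μ :=
    fun i k hk => (memLp_two_iff_integrable_sq_norm (hXx_L2 i k hk).1).mp (hXx_L2 i k hk)
  have hA_nonneg : ∀ (i : Fin S) (k : ℕ), 0 ≤ ∫ ω, ‖X i k ω - x‖^2 ∂μ :=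
    fun i k => integral_nonneg fun ω => sq_nonneg _
  -- elementary norm inequalities
  have hsq2 : ∀ a b : E, ‖a + b‖^2 ≤ 2*‖a‖^2 + 2*‖b‖^2 := by
    intro a b
    have h : ‖a + b‖ ≤ ‖a‖ + ‖b‖ := norm_add_le a b
    nlinarith [norm_nonneg a, norm_nonneg b, norm_nonneg (a+b), sq_nonneg (‖a‖ - ‖b‖)]
  have hsq3 : ∀ a b c : E, ‖a + b + c‖^2 ≤ 3*‖a‖^2 + 3*‖b‖^2 + 3*‖c‖^2 := by
    intro a b c
    have h : ‖a + b + c‖ ≤ ‖a‖ + ‖b‖ + ‖c‖ := norm_add₃_le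
    nlinarith [norm_nonneg a, norm_nonneg b, norm_nonneg c, norm_nonneg (a+b+c),
      sq_nonneg (‖a‖-‖b‖), sq_nonneg (‖a‖-‖c‖), sq_nonneg (‖b‖-‖c‖)]
  -- main per-step estimate
  have hmain : ∀ (i : Fin S) (k : Fin K),
      (∫ ω, ‖X i (k:ℕ) ω - x‖^2 ∂μ)
        ≤ 2*η^2*((k:ℕ):ℝ)*σ^2
          + 6*η^2*β^2*((k:ℕ):ℝ)*(∑ l ∈ T (k:ℕ), ∫ ω, ‖X i (l:ℕ) ω - x‖^2 ∂μ)
          + 6*η^2*((k:ℕ):ℝ)^2*(σc^2 + N) := by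
    intro i k
    set kn := (k:ℕ) with hkn
    have hkK : kn ≤ K := k.isLt.le
    set ξf : Fin K → Ω → E := fun l ω => g i l ω - gradient Ff (X i (l:ℕ) ω) with hξf
    set bf : Fin K → Ω → E := fun l ω => gradient Ff (X i (l:ℕ) ω) - gradient Ff x with hbf
    set cf : Ω → E := fun ω => gc ω - gradient Fc x with hcf
    set v : E := gradient Ff x + gradient Fc x with hv
    set Sξ : Ω → E := fun ω => ∑ l ∈ T kn, ξf l ω with hSξdef
    set Rf : Ω → E := fun ω => (∑ l ∈ T kn, bf l ω) + (kn:ℝ) • cf ω + (kn:ℝ) • v with hRfdef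
    -- decomposition of the sum
    have hnsmul : ∀ y : E, (kn • y : E) = (kn:ℝ) • y := fun y =>
      (Nat.cast_smul_eq_nsmul ℝ kn y).symm
    have hsum_split : ∀ ω, ∑ l ∈ T kn, (g i l ω + gc ω) = Sξ ω + Rf ω := by
      intro ω
      have h1 : ∀ l ∈ T kn, g i l ω + gc ω = ξf l ω + (bf l ω + (cf ω + v)) := by
        intro l _
        simp only [hξf, hbf, hcf, hv]
        abel
      rw [Finset.sum_congr rfl h1, Finset.sum_add_distrib, Finset.sum_add_distrib,
        Finset.sum_const, hTcard kn hkK, hnsmul, smul_add]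
      simp only [hSξdef, hRfdef]
      abel
    have hXd : ∀ ω, X i kn ω - x = (-η) • (Sξ ω + Rf ω) := by
      intro ω
      rw [hXrep i kn hkK]
      simp only []
      rw [hsum_split ω, sub_sub_cancel_left, ← neg_smul]
    have hXnorm : ∀ ω, ‖X i kn ω - x‖^2 = η^2 * ‖Sξ ω + Rf ω‖^2 := by
      intro ω
      rw [hXd ω, norm_smul, mul_pow]
      simp [Real.norm_eq_abs, sq_abs]
    -- L² facts
    have hξL2' : ∀ l : Fin K, MemLp (ξf l) 2 μ := fun l => hξ_L2 i l
    have hSξ_L2 : MemLp Sξ 2 μ := by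
      have hs := memLp_finset_sum' (T kn) (fun l (_ : l ∈ T kn) => hξL2' l)
      have he : (∑ l ∈ T kn, ξf l) = Sξ := by funext ω; simp [hSξdef]
      rwa [he] at hs
    have hb_L2 : ∀ l : Fin K, MemLp (bf l) 2 μ := fun l =>
      (hφ_L2 i l l.isLt.le).sub (memLp_const _)
    have hSb_L2 : MemLp (fun ω => ∑ l ∈ T kn, bf l ω) 2 μ := by
      have hs := memLp_finset_sum' (T kn) (fun l (_ : l ∈ T kn) => hb_L2 l)
      have he : (∑ l ∈ T kn, bf l) = fun ω => ∑ l ∈ T kn, bf l ω := by funext ω; simp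
      rwa [he] at hs
    have hc_L2 : MemLp cf 2 μ := hgc_L2.sub (memLp_const _)
    have hR_L2 : MemLp Rf 2 μ := by
      have h4 := ((hSb_L2.add (hc_L2.const_smul ((kn:ℝ)))).add
        (memLp_const ((kn:ℝ) • v)))
      refine h4.ae_eq (Filter.Eventually.of_forall fun ω => ?_)
      simp only [Pi.add_apply, Pi.smul_apply, hRfdef]
    have hSR_L2 : MemLp (fun ω => Sξ ω + Rf ω) 2 μ := by
      have h4 := hSξ_L2.add hR_L2
      exact h4.ae_eq (Filter.Eventually.of_forall fun ω => by simp)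
    have hIRξ : Integrable (fun ω => ‖Sξ ω‖^2) μ :=
      (memLp_two_iff_integrable_sq_norm hSξ_L2.1).mp hSξ_L2
    have hIR : Integrable (fun ω => ‖Rf ω‖^2) μ :=
      (memLp_two_iff_integrable_sq_norm hR_L2.1).mp hR_L2
    have hISR : Integrable (fun ω => ‖Sξ ω + Rf ω‖^2) μ :=
      (memLp_two_iff_integrable_sq_norm hSR_L2.1).mp hSR_L2
    have hIb : ∀ l : Fin K, Integrable (fun ω => ‖bf l ω‖^2) μ := fun l =>
      (memLp_two_iff_integrable_sq_norm (hb_L2 l).1).mp (hb_L2 l)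
    have hISb : Integrable (fun ω => ‖∑ l ∈ T kn, bf l ω‖^2) μ :=
      (memLp_two_iff_integrable_sq_norm hSb_L2.1).mp hSb_L2
    have hIc : Integrable (fun ω => ‖cf ω‖^2) μ :=
      (memLp_two_iff_integrable_sq_norm hc_L2.1).mp hc_L2
    -- step A : rewrite the integral
    have hstepA : (∫ ω, ‖X i kn ω - x‖^2 ∂μ) = η^2 * ∫ ω, ‖Sξ ω + Rf ω‖^2 ∂μ := by
      rw [← integral_const_mul]
      exact integral_congr_ae (Filter.Eventually.of_forall hXnorm)
    -- step B : split
    have hstepB : ∫ ω, ‖Sξ ω + Rf ω‖^2 ∂μ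
        ≤ 2*(∫ ω, ‖Sξ ω‖^2 ∂μ) + 2*(∫ ω, ‖Rf ω‖^2 ∂μ) := by
      have hgsum : Integrable (fun ω => 2*‖Sξ ω‖^2 + 2*‖Rf ω‖^2) μ :=
        (hIRξ.const_mul 2).add (hIR.const_mul 2)
      have h := integral_mono hISR hgsum (fun ω => hsq2 (Sξ ω) (Rf ω))
      rwa [integral_add (hIRξ.const_mul 2) (hIR.const_mul 2), integral_const_mul,
        integral_const_mul] at h
    -- step C : martingale bound
    have hstepC : ∫ ω, ‖Sξ ω‖^2 ∂μ ≤ (kn:ℝ) * σ^2 := by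
      have hIint : ∀ l m' : Fin K, Integrable (fun ω => ⟪ξf l ω, ξf m' ω⟫) μ := fun l m' =>
        integrable_inner_of_memL2 (hξL2' l) (hξL2' m')
      have hexp : (fun ω => ‖Sξ ω‖^2)
          = fun ω => ∑ l ∈ T kn, ∑ m' ∈ T kn, ⟪ξf l ω, ξf m' ω⟫ := by
        funext ω
        rw [← real_inner_self_eq_norm_sq]
        simp only [hSξdef]
        rw [sum_inner]
        exact Finset.sum_congr rfl fun l _ => inner_sum _ _ _
      have h1 : ∫ ω, ‖Sξ ω‖^2 ∂μ
          = ∑ l ∈ T kn, ∑ m' ∈ T kn, ∫ ω, ⟪ξf l ω, ξf m' ω⟫ ∂μ := by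
        rw [hexp]
        rw [integral_finset_sum _ (fun l _ => integrable_finset_sum _ (fun m' _ => hIint l m'))]
        exact Finset.sum_congr rfl fun l _ =>
          integral_finset_sum _ (fun m' _ => hIint l m')
      have hdiagle : ∀ l ∈ T kn, (∑ m' ∈ T kn, ∫ ω, ⟪ξf l ω, ξf m' ω⟫ ∂μ) ≤ σ^2 := by
        intro l hl
        have heq : (∑ m' ∈ T kn, ∫ ω, ⟪ξf l ω, ξf m' ω⟫ ∂μ)
            = ∫ ω, ⟪ξf l ω, ξf l ω⟫ ∂μ := by
          refine Finset.sum_eq_single_of_mem l hl ?_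
          intro m' _ hne
          rcases Nat.lt_or_ge (m':ℕ) (l:ℕ) with hlt | hge
          · have hc := hcross i m' l hlt
            rw [show (fun ω => ⟪ξf l ω, ξf m' ω⟫)
                = fun ω => ⟪ξf m' ω, ξf l ω⟫ from funext fun ω => real_inner_comm _ _]
            simp only [hξf]
            exact hc
          · have hlt2 : (l:ℕ) < (m':ℕ) := by
              rcases Nat.lt_or_ge (l:ℕ) (m':ℕ) with h' | h'
              · exact h'
              · exact absurd (Fin.val_injective (le_antisymm h' hge)) hne
            have hc := hcross i l m' hlt2
            simp only [hξf]
            exact hc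
        rw [heq]
        have h2 : (∫ ω, ⟪ξf l ω, ξf l ω⟫ ∂μ) = ∫ ω, ‖ξf l ω‖^2 ∂μ :=
          integral_congr_ae (Filter.Eventually.of_forall fun ω =>
            real_inner_self_eq_norm_sq _)
        rw [h2]
        have hb := hσbound i l
        simp only [hξf]
        exact hb
      calc ∫ ω, ‖Sξ ω‖^2 ∂μ
          = ∑ l ∈ T kn, ∑ m' ∈ T kn, ∫ ω, ⟪ξf l ω, ξf m' ω⟫ ∂μ := h1
        _ ≤ ∑ _l ∈ T kn, σ^2 := Finset.sum_le_sum hdiagle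
        _ = (kn:ℝ) * σ^2 := by
            rw [Finset.sum_const, hTcard kn hkK, nsmul_eq_mul]
    -- step D : drift term bound
    have hbound_b : ∀ l ∈ T kn,
        ∫ ω, ‖bf l ω‖^2 ∂μ ≤ β^2 * ∫ ω, ‖X i (l:ℕ) ω - x‖^2 ∂μ := by
      intro l _
      have hptw : ∀ ω, ‖bf l ω‖^2 ≤ β^2 * ‖X i (l:ℕ) ω - x‖^2 := by
        intro ω
        have h := hFf_smooth (X i (l:ℕ) ω) x
        simp only [hbf]
        nlinarith [norm_nonneg (gradient Ff (X i (l:ℕ) ω) - gradient Ff x),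
          norm_nonneg (X i (l:ℕ) ω - x), hβ.le]
      have h := integral_mono (hIb l) ((hA_int i l l.isLt.le).const_mul (β^2)) hptw
      rwa [integral_const_mul] at h
    have hstepD : ∫ ω, ‖∑ l ∈ T kn, bf l ω‖^2 ∂μ
        ≤ (kn:ℝ) * (β^2 * ∑ l ∈ T kn, ∫ ω, ‖X i (l:ℕ) ω - x‖^2 ∂μ) := by
      have hptw : ∀ ω, ‖∑ l ∈ T kn, bf l ω‖^2 ≤ (kn:ℝ) * ∑ l ∈ T kn, ‖bf l ω‖^2 := by
        intro ω
        have h1 : ‖∑ l ∈ T kn, bf l ω‖ ≤ ∑ l ∈ T kn, ‖bf l ω‖ := norm_sum_le _ _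
        have h3 : ‖∑ l ∈ T kn, bf l ω‖^2 ≤ (∑ l ∈ T kn, ‖bf l ω‖)^2 :=
          pow_le_pow_left₀ (norm_nonneg _) h1 2
        have h2 : (∑ l ∈ T kn, ‖bf l ω‖)^2
            ≤ (T kn).card * ∑ l ∈ T kn, ‖bf l ω‖^2 := sq_sum_le_card_mul_sum_sq
        rw [hTcard kn hkK] at h2
        exact le_trans h3 h2
      have hint_right : Integrable (fun ω => (kn:ℝ) * ∑ l ∈ T kn, ‖bf l ω‖^2) μ :=
        (integrable_finset_sum _ (fun l _ => hIb l)).const_mul _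
      have h4 := integral_mono hISb hint_right hptw
      rw [integral_const_mul, integral_finset_sum _ (fun l _ => hIb l)] at h4
      refine h4.trans ?_
      refine mul_le_mul_of_nonneg_left ?_ (Nat.cast_nonneg kn)
      rw [Finset.mul_sum]
      exact Finset.sum_le_sum hbound_b
    -- step E : bound on Rf
    have hstepE : ∫ ω, ‖Rf ω‖^2 ∂μ
        ≤ 3*((kn:ℝ) * (β^2 * ∑ l ∈ T kn, ∫ ω, ‖X i (l:ℕ) ω - x‖^2 ∂μ))
          + 3*(kn:ℝ)^2*σc^2 + 3*(kn:ℝ)^2*N := by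
      have hvN : ‖v‖^2 = N := by rw [hv, hNdef]
      have hptw : ∀ ω, ‖Rf ω‖^2
          ≤ 3*‖∑ l ∈ T kn, bf l ω‖^2 + 3*((kn:ℝ)^2*‖cf ω‖^2) + 3*((kn:ℝ)^2*N) := by
        intro ω
        have h := hsq3 (∑ l ∈ T kn, bf l ω) ((kn:ℝ) • cf ω) ((kn:ℝ) • v)
        have h1 : ‖(kn:ℝ) • cf ω‖^2 = (kn:ℝ)^2 * ‖cf ω‖^2 := by
          rw [norm_smul, mul_pow]; simp [Real.norm_eq_abs, sq_abs]
        have h2 : ‖(kn:ℝ) • v‖^2 = (kn:ℝ)^2 * N := by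
          rw [norm_smul, mul_pow, hvN]; simp [Real.norm_eq_abs, sq_abs]
        calc ‖Rf ω‖^2 = ‖(∑ l ∈ T kn, bf l ω) + (kn:ℝ) • cf ω + (kn:ℝ) • v‖^2 := by
              rw [hRfdef]
          _ ≤ 3*‖∑ l ∈ T kn, bf l ω‖^2 + 3*‖(kn:ℝ) • cf ω‖^2 + 3*‖(kn:ℝ) • v‖^2 := h
          _ = 3*‖∑ l ∈ T kn, bf l ω‖^2 + 3*((kn:ℝ)^2*‖cf ω‖^2) + 3*((kn:ℝ)^2*N) := by
              rw [h1, h2]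
      have i1 : Integrable (fun ω => 3*‖∑ l ∈ T kn, bf l ω‖^2) μ := hISb.const_mul 3
      have i2 : Integrable (fun ω => 3*((kn:ℝ)^2*‖cf ω‖^2)) μ :=
        (hIc.const_mul ((kn:ℝ)^2)).const_mul 3
      have i12 : Integrable
          (fun ω => 3*‖∑ l ∈ T kn, bf l ω‖^2 + 3*((kn:ℝ)^2*‖cf ω‖^2)) μ := i1.add i2
      have hint_right : Integrable (fun ω =>
          3*‖∑ l ∈ T kn, bf l ω‖^2 + 3*((kn:ℝ)^2*‖cf ω‖^2) + 3*((kn:ℝ)^2*N)) μ :=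
        i12.add (integrable_const _)
      have h4 := integral_mono hIR hint_right hptw
      rw [integral_add i12 (integrable_const _), integral_add i1 i2,
        integral_const_mul, integral_const_mul, integral_const_mul, integral_const,
        probReal_univ, one_smul] at h4
      have h5 : ∫ ω, ‖cf ω‖^2 ∂μ ≤ σc^2 := by
        have h5' := hgc_var
        simp only [hcf]
        exact h5'
      refine h4.trans ?_
      have h7 := hstepD
      have hk2 : (0:ℝ) ≤ 3*(kn:ℝ)^2 := by positivity
      nlinarith [mul_le_mul_of_nonneg_left h5 hk2, mul_le_mul_of_nonneg_left h7 (by norm_num : (0:ℝ) ≤ 3)]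
    -- combine
    have hI : ∫ ω, ‖Sξ ω + Rf ω‖^2 ∂μ
        ≤ 2*((kn:ℝ)*σ^2)
          + 2*(3*((kn:ℝ) * (β^2 * ∑ l ∈ T kn, ∫ ω, ‖X i (l:ℕ) ω - x‖^2 ∂μ))
              + 3*(kn:ℝ)^2*σc^2 + 3*(kn:ℝ)^2*N) := by
      linarith [hstepB, hstepC, hstepE]
    calc (∫ ω, ‖X i kn ω - x‖^2 ∂μ)
        = η^2 * ∫ ω, ‖Sξ ω + Rf ω‖^2 ∂μ := hstepA
      _ ≤ η^2 * (2*((kn:ℝ)*σ^2)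
          + 2*(3*((kn:ℝ) * (β^2 * ∑ l ∈ T kn, ∫ ω, ‖X i (l:ℕ) ω - x‖^2 ∂μ))
              + 3*(kn:ℝ)^2*σc^2 + 3*(kn:ℝ)^2*N)) :=
          mul_le_mul_of_nonneg_left hI (sq_nonneg η)
      _ = 2*η^2*((kn:ℝ):ℝ)*σ^2
          + 6*η^2*β^2*((kn:ℝ):ℝ)*(∑ l ∈ T kn, ∫ ω, ‖X i (l:ℕ) ω - x‖^2 ∂μ)
          + 6*η^2*((kn:ℝ):ℝ)^2*(σc^2 + N) := by push_cast; ring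
  -- effective step size bound
  have h18 : η*(K:ℝ)*β*ηs ≤ 1/18 := by
    have h2 : ηt*β ≤ 1/18 := by
      have h3 := mul_le_mul_of_nonneg_right hstep hβ.le
      have h4 : 1/(18*β)*β = 1/18 := by field_simp
      rwa [h4] at h3
    calc η*(K:ℝ)*β*ηs = ηt*β := by rw [hηt]; ring
      _ ≤ 1/18 := h2
  have hq : 3*η^2*β^2*(K:ℝ)^2 ≤ 1/108 := by
    have hu0 : 0 ≤ η*(K:ℝ)*β := by positivity
    have hle : η*(K:ℝ)*β ≤ 1/18 := by
      nlinarith [mul_nonneg hu0 (sub_nonneg.mpr hηs1)]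
    nlinarith [hu0, hle]
  -- Gauss-type sums
  have hsum1 : (∑ k : Fin K, ((k:ℕ):ℝ)) ≤ (K:ℝ)^2/2 := by
    rw [Fin.sum_univ_eq_sum_range (fun j => (j:ℝ)) K]
    have hgen : ∀ n : ℕ, (∑ j ∈ Finset.range n, (j:ℝ)) ≤ (n:ℝ)^2/2 := by
      intro n
      induction n with
      | zero => simp
      | succ m ih =>
        rw [Finset.sum_range_succ]
        push_cast
        nlinarith [ih]
    exact hgen K
  have hsum2 : (∑ k : Fin K, ((k:ℕ):ℝ)^2) ≤ (K:ℝ)^3 := by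
    rw [Fin.sum_univ_eq_sum_range (fun j => (j:ℝ)^2) K]
    have hgen : ∀ n : ℕ, (∑ j ∈ Finset.range n, (j:ℝ)^2) ≤ (n:ℝ)^3 := by
      intro n
      induction n with
      | zero => simp
      | succ m ih =>
        rw [Finset.sum_range_succ]
        push_cast
        nlinarith [ih, Nat.cast_nonneg (α := ℝ) m]
    exact hgen K
  -- per-client bound
  have hC0 : 0 ≤ σc^2 + N := add_nonneg (sq_nonneg _) hN0
  have hD : ∀ i : Fin S, (∑ k : Fin K, ∫ ω, ‖X i (k:ℕ) ω - x‖^2 ∂μ)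
      ≤ (108/107) * (η^2*σ^2*(K:ℝ)^2 + 6*η^2*(σc^2+N)*(K:ℝ)^3) := by
    intro i
    set D := ∑ k : Fin K, ∫ ω, ‖X i (k:ℕ) ω - x‖^2 ∂μ with hDdef
    have hD0 : 0 ≤ D := Finset.sum_nonneg fun k _ => hA_nonneg i _
    have hsub : ∀ k : Fin K,
        (∑ l ∈ T (k:ℕ), ∫ ω, ‖X i (l:ℕ) ω - x‖^2 ∂μ) ≤ D := by
      intro k
      rw [hDdef]
      exact Finset.sum_le_sum_of_subset_of_nonneg (Finset.subset_univ _)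
        (fun l _ _ => hA_nonneg i _)
    have hmain2 : ∀ k : Fin K, (∫ ω, ‖X i (k:ℕ) ω - x‖^2 ∂μ)
        ≤ 2*η^2*((k:ℕ):ℝ)*σ^2 + 6*η^2*β^2*((k:ℕ):ℝ)*D + 6*η^2*((k:ℕ):ℝ)^2*(σc^2+N) := by
      intro k
      refine (hmain i k).trans ?_
      have h := mul_le_mul_of_nonneg_left (hsub k)
        (by positivity : (0:ℝ) ≤ 6*η^2*β^2*((k:ℕ):ℝ))
      linarith [h]
    have hDle : D ≤ 2*η^2*σ^2*((K:ℝ)^2/2) + 6*η^2*β^2*D*((K:ℝ)^2/2)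
        + 6*η^2*(σc^2+N)*(K:ℝ)^3 := by
      have h1 : D ≤ ∑ k : Fin K, (2*η^2*((k:ℕ):ℝ)*σ^2 + 6*η^2*β^2*((k:ℕ):ℝ)*D
          + 6*η^2*((k:ℕ):ℝ)^2*(σc^2+N)) := by
        rw [hDdef]
        exact Finset.sum_le_sum fun k _ => hmain2 k
      have h2 : ∑ k : Fin K, (2*η^2*((k:ℕ):ℝ)*σ^2 + 6*η^2*β^2*((k:ℕ):ℝ)*D
            + 6*η^2*((k:ℕ):ℝ)^2*(σc^2+N))
          = (2*η^2*σ^2)*(∑ k : Fin K, ((k:ℕ):ℝ))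
            + (6*η^2*β^2*D)*(∑ k : Fin K, ((k:ℕ):ℝ))
            + (6*η^2*(σc^2+N))*(∑ k : Fin K, ((k:ℕ):ℝ)^2) := by
        calc ∑ k : Fin K, (2*η^2*((k:ℕ):ℝ)*σ^2 + 6*η^2*β^2*((k:ℕ):ℝ)*D
              + 6*η^2*((k:ℕ):ℝ)^2*(σc^2+N))
            = ∑ k : Fin K, ((2*η^2*σ^2)*((k:ℕ):ℝ) + ((6*η^2*β^2*D)*((k:ℕ):ℝ)
              + (6*η^2*(σc^2+N))*((k:ℕ):ℝ)^2)) :=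
              Finset.sum_congr rfl fun k _ => by ring
          _ = _ := by
              rw [Finset.sum_add_distrib, Finset.sum_add_distrib,
                ← Finset.mul_sum, ← Finset.mul_sum, ← Finset.mul_sum]
              ring
      rw [h2] at h1
      have c1 : (0:ℝ) ≤ 2*η^2*σ^2 := by positivity
      have c2 : (0:ℝ) ≤ 6*η^2*β^2*D := by positivity
      have c3 : (0:ℝ) ≤ 6*η^2*(σc^2+N) := by positivity
      nlinarith [mul_le_mul_of_nonneg_left hsum1 c1, mul_le_mul_of_nonneg_left hsum1 c2,
        mul_le_mul_of_nonneg_left hsum2 c3]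
    nlinarith [hDle, mul_nonneg (sub_nonneg.mpr hq) hD0]
  -- assemble the drift bound
  have hdrift_le : drift
      ≤ (108/107) * (η^2*σ^2*(K:ℝ)^2 + 6*η^2*(σc^2+N)*(K:ℝ)^3) / (K:ℝ) := by
    rw [hdrift]
    have hsumA : (∑ i : Fin S, ∑ k : Fin K, ∫ ω, ‖X i (k:ℕ) ω - x‖^2 ∂μ)
        ≤ (S:ℝ) * ((108/107) * (η^2*σ^2*(K:ℝ)^2 + 6*η^2*(σc^2+N)*(K:ℝ)^3)) := by
      calc (∑ i : Fin S, ∑ k : Fin K, ∫ ω, ‖X i (k:ℕ) ω - x‖^2 ∂μ)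
          ≤ ∑ _i : Fin S, (108/107) * (η^2*σ^2*(K:ℝ)^2 + 6*η^2*(σc^2+N)*(K:ℝ)^3) :=
            Finset.sum_le_sum fun i _ => hD i
        _ = (S:ℝ) * ((108/107) * (η^2*σ^2*(K:ℝ)^2 + 6*η^2*(σc^2+N)*(K:ℝ)^3)) := by
            rw [Finset.sum_const, Finset.card_univ, Fintype.card_fin, nsmul_eq_mul]
    calc (1 / ((K:ℝ) * (S:ℝ))) * ∑ i : Fin S, ∑ k : Fin K, ∫ ω, ‖X i (k:ℕ) ω - x‖^2 ∂μ
        ≤ (1 / ((K:ℝ) * (S:ℝ)))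
          * ((S:ℝ) * ((108/107) * (η^2*σ^2*(K:ℝ)^2 + 6*η^2*(σc^2+N)*(K:ℝ)^3))) :=
          mul_le_mul_of_nonneg_left hsumA (by positivity)
      _ = (108/107) * (η^2*σ^2*(K:ℝ)^2 + 6*η^2*(σc^2+N)*(K:ℝ)^3) / (K:ℝ) := by
          field_simp
  refine hdrift_le.trans ?_
  rw [hgrad_add, ← hNdef]
  have hKne : (K:ℝ) ≠ 0 := ne_of_gt hK0
  have hηsne : ηs ≠ 0 := ne_of_gt hηs
  have e1 : (108/107) * (η^2*σ^2*(K:ℝ)^2 + 6*η^2*(σc^2+N)*(K:ℝ)^3) / (K:ℝ)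
      = (108/107)*η^2*σ^2*(K:ℝ) + (648/107)*η^2*(K:ℝ)^2*σc^2
        + (648/107)*η^2*(K:ℝ)^2*N := by
    field_simp
    ring
  have e2 : (2*ηt^2/ηs^2) * ((1/(K:ℝ))*σ^2 + 4*σc^2)
      = 2*(K:ℝ)*η^2*σ^2 + 8*(K:ℝ)^2*η^2*σc^2 := by
    rw [hηt]
    field_simp
    ring
  rw [e1, e2]
  have t1 : (108/107)*η^2*σ^2*(K:ℝ) ≤ 2*(K:ℝ)*η^2*σ^2 := by
    nlinarith [mul_nonneg (mul_nonneg hK0.le (sq_nonneg η)) (sq_nonneg σ)]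
  have t2 : (648/107)*η^2*(K:ℝ)^2*σc^2 ≤ 8*(K:ℝ)^2*η^2*σc^2 := by
    nlinarith [mul_nonneg (mul_nonneg (sq_nonneg ((K:ℝ))) (sq_nonneg η)) (sq_nonneg σc)]
  have t3 : (648/107)*η^2*(K:ℝ)^2*N ≤ (4*ηt/(9*β*ηs^2))*N := by
    have hpos : (0:ℝ) < 9*β*ηs^2 := by positivity
    have hkey : (648/107)*η^2*(K:ℝ)^2*N * (9*β*ηs^2) ≤ 4*ηt*N := by
      rw [hηt]
      have hQ : (0:ℝ) ≤ η*(K:ℝ)*N*ηs := by positivity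
      nlinarith [h18, hQ]
    have h6 := (le_div_iff₀ hpos).mpr hkey
    calc (648/107)*η^2*(K:ℝ)^2*N ≤ 4*ηt*N/(9*β*ηs^2) := h6
      _ = (4*ηt/(9*β*ηs^2))*N := by ring
  linarith [t1, t2, t3]
end
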